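/- arXiv:0904.3777 — 4 statements merged into one kernel-verified Lean document; each statement's English description precedes it below -/
import Mathlib

section
/- For every positive integer D congruent to 0 or 3 modulo 4, the class number H_4^*(4D) of Γ_0^*(4)-classes of forms in Q_{4D,4} equals three times the Hurwitz class number H(D); that is, H_4^*(4D) = 3·H(D). -/
/-!
Statement 0: For every positive integer `D ≡ 0, 3 (mod 4)`, the class number
`H₄^*(4D)` of `Γ₀^*(4)`-classes of forms in `Q_{4D,4}` equals `3 · H(D)`,
where `H(D)` is the Hurwitz class number.
-/

/-- A binary quadratic form `(a, b, c)`, representing `a x² + b x y + c y²`. -/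
abbrev QF := ℤ × ℤ × ℤ

/-- The discriminant `b² - 4 a c` of a binary quadratic form. -/
def disc (Q : QF) : ℤ := Q.2.1 ^ 2 - 4 * Q.1 * Q.2.2

/-- The (right) action of an integer matrix `g = (p q; r s)` on a form:
`(Q ∘ g)(x, y) = Q (p x + q y, r x + s y)`. -/
def act (Q : QF) (g : Matrix (Fin 2) (Fin 2) ℤ) : QF :=
  (Q.1 * g 0 0 ^ 2 + Q.2.1 * g 0 0 * g 1 0 + Q.2.2 * g 1 0 ^ 2,
   2 * Q.1 * g 0 0 * g 0 1 + Q.2.1 * (g 0 0 * g 1 1 + g 0 1 * g 1 0) + 2 * Q.2.2 * g 1 0 * g 1 1,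
   Q.1 * g 0 1 ^ 2 + Q.2.1 * g 0 1 * g 1 1 + Q.2.2 * g 1 1 ^ 2)

/-- Integer matrices of determinant `1` with lower-left entry divisible by `N`. -/
def Gamma0 (N : ℕ) : Set (Matrix (Fin 2) (Fin 2) ℤ) :=
  {g | g.det = 1 ∧ (N : ℤ) ∣ g 1 0}

/-- `Q_{D,N}`: positive definite forms `[N a, b, c]` of discriminant `-D`. -/
def QDN (N : ℕ) (D : ℤ) : Set QF :=
  {Q | 0 < Q.1 ∧ (N : ℤ) ∣ Q.1 ∧ disc Q = -D}

/-- The action of the Fricke involution `W₄` on forms: `[4a, b, c] ↦ [4c, -b, a]`. -/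
def fricke4 (Q : QF) : QF := (4 * Q.2.2, -Q.2.1, Q.1 / 4)

/-- `Γ₀(N)`-equivalence of forms. -/
def req (N : ℕ) (Q Q' : QF) : Prop := ∃ g ∈ Gamma0 N, act Q g = Q'

/-- `Γ₀^*(4)`-equivalence of forms, where `Γ₀^*(4)` is generated by `Γ₀(4)`
and the Fricke involution `W₄`. -/
def reqStar4 (Q Q' : QF) : Prop :=
  ∃ g ∈ Gamma0 4, act Q g = Q' ∨ fricke4 (act Q g) = Q'

/-- Twice the order of the stabilizer of `Q` in `Γ₀(N) ⊂ PSL₂(ℤ)`: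
the number of determinant-one integer matrices in `Γ₀(N)` fixing `Q`
(the matrices `g` and `-g` act identically). -/
noncomputable def stabCard (N : ℕ) (Q : QF) : ℕ :=
  Nat.card {g : Matrix (Fin 2) (Fin 2) ℤ // g ∈ Gamma0 N ∧ act Q g = Q}

/-- Twice the order of the stabilizer of `Q` in `Γ₀^*(4)` (mod `±1`): elements of
`Γ₀^*(4)` are represented, up to sign, either by a matrix of `Γ₀(4)` or by such
a matrix followed by the Fricke involution. -/
noncomputable def stabStarCard4 (Q : QF) : ℕ :=
  Nat.card {g : Matrix (Fin 2) (Fin 2) ℤ // g ∈ Gamma0 4 ∧ act Q g = Q} +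
    Nat.card {g : Matrix (Fin 2) (Fin 2) ℤ // g ∈ Gamma0 4 ∧ fricke4 (act Q g) = Q}

/-- `R` is a complete (finite) set of representatives for the elements of `S`
modulo the relation `r`. -/
def IsReps (S : Set QF) (r : QF → QF → Prop) (R : Finset QF) : Prop :=
  ↑R ⊆ S ∧ ∀ Q ∈ S, ∃! Q', Q' ∈ R ∧ r Q Q'

namespace CNR

abbrev M2 := Matrix (Fin 2) (Fin 2) ℤ

lemma act_one (Q : QF) : act Q (1 : M2) = Q := by
  simp [act]

lemma mul_ent (g h : M2) (i j : Fin 2) :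
    (g * h) i j = g i 0 * h 0 j + g i 1 * h 1 j := by
  simp [Matrix.mul_apply, Fin.sum_univ_two]

lemma act_mul (Q : QF) (g h : M2) : act Q (g * h) = act (act Q g) h := by
  refine Prod.ext ?_ (Prod.ext ?_ ?_) <;>
    simp only [act, mul_ent] <;> ring

lemma disc_act (Q : QF) (g : M2) : disc (act Q g) = g.det ^ 2 * disc Q := by
  rw [Matrix.det_fin_two]
  simp only [disc, act]; ring

end CNR

namespace CNR

def inv2 (g : M2) : M2 := !![g 1 1, -(g 0 1); -(g 1 0), g 0 0]

lemma ent00 (a b c d : ℤ) : (!![a,b;c,d] : M2) 0 0 = a := rfl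
lemma ent01 (a b c d : ℤ) : (!![a,b;c,d] : M2) 0 1 = b := rfl
lemma ent10 (a b c d : ℤ) : (!![a,b;c,d] : M2) 1 0 = c := rfl
lemma ent11 (a b c d : ℤ) : (!![a,b;c,d] : M2) 1 1 = d := rfl

lemma mul_inv2 (g : M2) (hg : g.det = 1) : g * inv2 g = 1 := by
  rw [Matrix.det_fin_two] at hg
  ext i j
  fin_cases i <;> fin_cases j <;>
    simp [mul_ent, inv2, ent00, ent01, ent10, ent11, Matrix.one_apply] <;> linarith

lemma inv2_mul (g : M2) (hg : g.det = 1) : inv2 g * g = 1 := by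
  rw [Matrix.det_fin_two] at hg
  ext i j
  fin_cases i <;> fin_cases j <;>
    simp [mul_ent, inv2, ent00, ent01, ent10, ent11, Matrix.one_apply] <;> linarith

lemma det_inv2 (g : M2) : (inv2 g).det = g.det := by
  rw [Matrix.det_fin_two, Matrix.det_fin_two]
  simp [inv2, ent00, ent01, ent10, ent11]; ring

lemma act_inv2 (Q Q' : QF) (g : M2) (hg : g.det = 1) (h : act Q g = Q') :
    act Q' (inv2 g) = Q := by
  rw [← h, ← act_mul, mul_inv2 g hg, act_one]

end CNR

namespace CNR

/-- The conjugated image of `Γ₀^*(4)` in `SL₂(ℤ)`: matrices congruent to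
`1` or to `(0 1; 1 0)` mod 2. -/
def Gp (g : M2) : Prop :=
  g.det = 1 ∧ ((2 ∣ g 0 1 ∧ 2 ∣ g 1 0) ∨ (2 ∣ g 0 0 ∧ 2 ∣ g 1 1))

lemma Gp_one : Gp (1 : M2) := by
  constructor
  · simp
  · left; constructor <;> simp [Matrix.one_apply]

lemma dvd2_iff (x : ℤ) : 2 ∣ x ↔ (x : ZMod 2) = 0 :=
  (ZMod.intCast_zmod_eq_zero_iff_dvd x 2).symm

lemma Gp_mul {g h : M2} (hg : Gp g) (hh : Gp h) : Gp (g * h) := by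
  obtain ⟨hg1, hg2⟩ := hg
  obtain ⟨hh1, hh2⟩ := hh
  refine ⟨by rw [Matrix.det_mul, hg1, hh1, one_mul], ?_⟩
  simp only [dvd2_iff] at hg2 hh2 ⊢
  simp only [mul_ent]
  rcases hg2 with ⟨e1, e2⟩ | ⟨e1, e2⟩ <;> rcases hh2 with ⟨f1, f2⟩ | ⟨f1, f2⟩
  · left; constructor <;> (push_cast; simp [e1, e2, f1, f2])
  · right; constructor <;> (push_cast; simp [e1, e2, f1, f2])
  · right; constructor <;> (push_cast; simp [e1, e2, f1, f2])
  · left; constructor <;> (push_cast; simp [e1, e2, f1, f2])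

lemma Gp_inv2 {g : M2} (hg : Gp g) : Gp (inv2 g) := by
  obtain ⟨hg1, hg2⟩ := hg
  refine ⟨by rw [det_inv2]; exact hg1, ?_⟩
  rcases hg2 with ⟨e1, e2⟩ | ⟨e1, e2⟩
  · left
    constructor
    · show 2 ∣ -(g 0 1); exact e1.neg_right
    · show 2 ∣ -(g 1 0); exact e2.neg_right
  · right
    exact ⟨e2, e1⟩

/-- Coset representatives of `Γ'` in `SL₂(ℤ)`. -/
def c : Fin 3 → M2 := ![1, !![1,1;0,1], !![1,0;1,1]]

lemma det_c (i : Fin 3) : (c i).det = 1 := by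
  fin_cases i <;> simp [c, Matrix.det_fin_two]

lemma coset_iff (cm : M2) (hc : cm.det = 1) (g : M2) :
    (∃ h, Gp h ∧ g = cm * h) ↔ Gp (inv2 cm * g) := by
  constructor
  · rintro ⟨h, hh, rfl⟩
    rwa [← Matrix.mul_assoc, inv2_mul cm hc, Matrix.one_mul]
  · intro h
    exact ⟨inv2 cm * g, h, by rw [← Matrix.mul_assoc, mul_inv2 cm hc, Matrix.one_mul]⟩

set_option synthInstance.maxHeartbeats 1000000 in
set_option synthInstance.maxSize 5000 in
set_option maxHeartbeats 1000000 in
lemma zmaster : ∀ a b c' d : ZMod 2, a * d - b * c' = 1 →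
    ((((b = 0 ∧ c' = 0) ∨ (a = 0 ∧ d = 0)) ∨
      ((b - d = 0 ∧ c' = 0) ∨ (a - c' = 0 ∧ d = 0)) ∨
      ((b = 0 ∧ c' - a = 0) ∨ (a = 0 ∧ d - b = 0))) ∧
    ¬(((b = 0 ∧ c' = 0) ∨ (a = 0 ∧ d = 0)) ∧
      ((b - d = 0 ∧ c' = 0) ∨ (a - c' = 0 ∧ d = 0))) ∧
    ¬(((b = 0 ∧ c' = 0) ∨ (a = 0 ∧ d = 0)) ∧
      ((b = 0 ∧ c' - a = 0) ∨ (a = 0 ∧ d - b = 0))) ∧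
    ¬(((b - d = 0 ∧ c' = 0) ∨ (a - c' = 0 ∧ d = 0)) ∧
      ((b = 0 ∧ c' - a = 0) ∨ (a = 0 ∧ d - b = 0)))) := by decide

end CNR

namespace CNR

lemma c0_val : c 0 = (1 : M2) := rfl
lemma c1_val : c 1 = !![1,1;0,1] := rfl
lemma c2_val : c 2 = !![1,0;1,1] := rfl

lemma c0_left (g : M2) : inv2 (c 0) * g = g := by
  ext i j
  fin_cases i <;> fin_cases j <;>
    simp [c0_val, inv2, mul_ent, Matrix.one_apply, ent00, ent01, ent10, ent11]

lemma c1_left (g : M2) :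
    inv2 (c 1) * g = !![g 0 0 - g 1 0, g 0 1 - g 1 1; g 1 0, g 1 1] := by
  ext i j
  fin_cases i <;> fin_cases j <;>
    simp [c1_val, inv2, mul_ent, ent00, ent01, ent10, ent11] <;> ring

lemma c2_left (g : M2) :
    inv2 (c 2) * g = !![g 0 0, g 0 1; g 1 0 - g 0 0, g 1 1 - g 0 1] := by
  ext i j
  fin_cases i <;> fin_cases j <;>
    simp [c2_val, inv2, mul_ent, ent00, ent01, ent10, ent11] <;> ring

lemma Gp_zmod (g : M2) : Gp g ↔ g.det = 1 ∧
    ((((g 0 1 : ℤ) : ZMod 2) = 0 ∧ ((g 1 0 : ℤ) : ZMod 2) = 0) ∨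
     (((g 0 0 : ℤ) : ZMod 2) = 0 ∧ ((g 1 1 : ℤ) : ZMod 2) = 0)) := by
  simp [Gp, dvd2_iff]

lemma Gp_entries (a b cc d : ℤ) (h : a * d - b * cc = 1) :
    Gp !![a,b;cc,d] ↔
      (((b : ZMod 2) = 0 ∧ (cc : ZMod 2) = 0) ∨ ((a : ZMod 2) = 0 ∧ (d : ZMod 2) = 0)) := by
  unfold Gp
  rw [Matrix.det_fin_two_of]
  simp [h, ent00, ent01, ent10, ent11, dvd2_iff]

lemma trichotomy (g : M2) (hg : g.det = 1) : ∃! i : Fin 3, ∃ h, Gp h ∧ g = c i * h := by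
  have hg' := hg
  rw [Matrix.det_fin_two] at hg'
  have hcast : (g 0 0 : ZMod 2) * (g 1 1 : ZMod 2)
      - (g 0 1 : ZMod 2) * (g 1 0 : ZMod 2) = 1 := by
    have : ((g 0 0 * g 1 1 - g 0 1 * g 1 0 : ℤ) : ZMod 2) = ((1 : ℤ) : ZMod 2) := by
      rw [hg']
    push_cast at this
    exact this
  obtain ⟨hex, h01, h02, h12⟩ := zmaster (g 0 0) (g 0 1) (g 1 0) (g 1 1) hcast
  have e0 : (∃ h, Gp h ∧ g = c 0 * h) ↔
      (((g 0 1 : ℤ) : ZMod 2) = 0 ∧ ((g 1 0 : ℤ) : ZMod 2) = 0) ∨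
      (((g 0 0 : ℤ) : ZMod 2) = 0 ∧ ((g 1 1 : ℤ) : ZMod 2) = 0) := by
    rw [coset_iff _ (det_c 0), c0_left]
    nth_rewrite 1 [Matrix.eta_fin_two g]
    rw [Gp_entries _ _ _ _ hg']
  have e1 : (∃ h, Gp h ∧ g = c 1 * h) ↔
      (((g 0 1 : ℤ) : ZMod 2) - ((g 1 1 : ℤ) : ZMod 2) = 0 ∧ ((g 1 0 : ℤ) : ZMod 2) = 0) ∨
      (((g 0 0 : ℤ) : ZMod 2) - ((g 1 0 : ℤ) : ZMod 2) = 0 ∧ ((g 1 1 : ℤ) : ZMod 2) = 0) := by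
    rw [coset_iff _ (det_c 1), c1_left,
      Gp_entries _ _ _ _ (by linear_combination hg'), Int.cast_sub, Int.cast_sub]
  have e2 : (∃ h, Gp h ∧ g = c 2 * h) ↔
      (((g 0 1 : ℤ) : ZMod 2) = 0 ∧ ((g 1 0 : ℤ) : ZMod 2) - ((g 0 0 : ℤ) : ZMod 2) = 0) ∨
      (((g 0 0 : ℤ) : ZMod 2) = 0 ∧ ((g 1 1 : ℤ) : ZMod 2) - ((g 0 1 : ℤ) : ZMod 2) = 0) := by
    rw [coset_iff _ (det_c 2), c2_left,
      Gp_entries _ _ _ _ (by linear_combination hg'), Int.cast_sub, Int.cast_sub]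
  rcases hex with hP | hP | hP
  · refine ⟨0, e0.mpr hP, ?_⟩
    intro j hj
    fin_cases j
    · rfl
    · exact absurd ⟨hP, e1.mp hj⟩ h01
    · exact absurd ⟨hP, e2.mp hj⟩ h02
  · refine ⟨1, e1.mpr hP, ?_⟩
    intro j hj
    fin_cases j
    · exact absurd ⟨e0.mp hj, hP⟩ h01
    · rfl
    · exact absurd ⟨hP, e2.mp hj⟩ h12
  · refine ⟨2, e2.mpr hP, ?_⟩
    intro j hj
    fin_cases j
    · exact absurd ⟨e0.mp hj, hP⟩ h02
    · exact absurd ⟨e1.mp hj, hP⟩ h12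
    · rfl

end CNR

namespace CNR

lemma one_le_sq {x : ℤ} (hx : x ≠ 0) : 1 ≤ x ^ 2 := by
  rcases hx.lt_or_gt with h | h <;> nlinarith

lemma act_pos {Q : QF} (hQ : 0 < Q.1) (hdisc : disc Q < 0) {g : M2} (hg : g.det = 1) :
    0 < (act Q g).1 := by
  rw [Matrix.det_fin_two] at hg
  have h4 : 4 * Q.1 * (act Q g).1
      = (2 * Q.1 * g 0 0 + Q.2.1 * g 1 0) ^ 2 - disc Q * (g 1 0) ^ 2 := by
    simp only [act, disc]
    ring
  rcases eq_or_ne (g 1 0) 0 with h | h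
  · have hp : g 0 0 ≠ 0 := by
      intro h0
      rw [h0, h] at hg
      simp at hg
    have h1 := one_le_sq hp
    rw [h] at h4
    ring_nf at h4
    nlinarith [h4, hQ, mul_pos hQ hQ,
      mul_le_mul_of_nonneg_left h1 (mul_pos hQ hQ).le]
  · have h1 := one_le_sq h
    have hd1 : disc Q ≤ -1 := by omega
    nlinarith [h4, hQ, h1, hd1, sq_nonneg (2 * Q.1 * g 0 0 + Q.2.1 * g 1 0)]

lemma abs_from_sq {x B : ℤ} (h1 : 1 ≤ B) (h : x ^ 2 ≤ B) : x ∈ Set.Icc (-B) B := by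
  constructor <;> nlinarith [sq_nonneg (x - 1), sq_nonneg (x + 1)]

set_option maxHeartbeats 1000000 in
lemma St_finite {Q : QF} (hQ : 0 < Q.1) (hdisc : disc Q < 0) :
    {k : M2 | k.det = 1 ∧ act Q k = Q}.Finite := by
  obtain ⟨a, b, cc⟩ := Q
  simp only [disc] at hdisc
  simp only at hQ
  have hc : 0 < cc := by nlinarith [sq_nonneg b]
  have hB1 : (1:ℤ) ≤ 8 * (a ^ 2 + a * cc) * (1 + b ^ 2) := by nlinarith [sq_nonneg b]
  refine Set.Finite.subset
    (Set.Finite.pi fun i : Fin 2 => Set.Finite.pi fun j : Fin 2 =>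
      Set.finite_Icc (-(8 * (a ^ 2 + a * cc) * (1 + b ^ 2))) (8 * (a ^ 2 + a * cc) * (1 + b ^ 2))) ?_
  rintro k ⟨hdet, hfix⟩
  have e1 : a * k 0 0 ^ 2 + b * (k 0 0) * (k 1 0) + cc * (k 1 0) ^ 2 = a := by
    have := congrArg Prod.fst hfix
    simpa [act] using this
  have e3 : a * k 0 1 ^ 2 + b * (k 0 1) * (k 1 1) + cc * (k 1 1) ^ 2 = cc := by
    have := congrArg (fun x : QF => x.2.2) hfix
    simpa [act] using this
  have key1 : (2 * a * k 0 0 + b * k 1 0) ^ 2 + (4 * a * cc - b ^ 2) * (k 1 0) ^ 2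
      = 4 * a ^ 2 := by linear_combination (4 * a) * e1
  have key3 : (2 * a * k 0 1 + b * k 1 1) ^ 2 + (4 * a * cc - b ^ 2) * (k 1 1) ^ 2
      = 4 * a * cc := by linear_combination (4 * a) * e3
  have hDpos : 1 ≤ 4 * a * cc - b ^ 2 := by linarith
  have hr : (k 1 0) ^ 2 ≤ 4 * a ^ 2 := by
    nlinarith [sq_nonneg (2 * a * k 0 0 + b * k 1 0),
      mul_nonneg (by linarith : (0:ℤ) ≤ 4 * a * cc - b ^ 2 - 1) (sq_nonneg (k 1 0))]
  have hs : (k 1 1) ^ 2 ≤ 4 * a * cc := by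
    nlinarith [sq_nonneg (2 * a * k 0 1 + b * k 1 1),
      mul_nonneg (by linarith : (0:ℤ) ≤ 4 * a * cc - b ^ 2 - 1) (sq_nonneg (k 1 1))]
  have hX1 : (2 * a * k 0 0 + b * k 1 0) ^ 2 ≤ 4 * a ^ 2 := by
    nlinarith [mul_nonneg (by linarith : (0:ℤ) ≤ 4 * a * cc - b ^ 2) (sq_nonneg (k 1 0))]
  have hX3 : (2 * a * k 0 1 + b * k 1 1) ^ 2 ≤ 4 * a * cc := by
    nlinarith [mul_nonneg (by linarith : (0:ℤ) ≤ 4 * a * cc - b ^ 2) (sq_nonneg (k 1 1))]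
  have hp4 : 4 * a ^ 2 * (k 0 0) ^ 2 ≤ 8 * a ^ 2 * (1 + b ^ 2) := by
    nlinarith [sq_nonneg (2 * a * k 0 0 + 2 * b * k 1 0), hX1,
      mul_le_mul_of_nonneg_left hr (sq_nonneg b)]
  have hq4 : 4 * a ^ 2 * (k 0 1) ^ 2 ≤ 8 * (a * cc) * (1 + b ^ 2) := by
    nlinarith [sq_nonneg (2 * a * k 0 1 + 2 * b * k 1 1), hX3,
      mul_le_mul_of_nonneg_left hs (sq_nonneg b)]
  have ha41 : (0:ℤ) ≤ 4 * a ^ 2 - 1 := by nlinarith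
  have hposac : (0:ℤ) ≤ 8 * (a * cc) * (1 + b ^ 2) := by positivity
  have hposa2 : (0:ℤ) ≤ 8 * a ^ 2 * (1 + b ^ 2) := by positivity
  have hp : (k 0 0) ^ 2 ≤ 8 * (a ^ 2 + a * cc) * (1 + b ^ 2) := by
    nlinarith [mul_nonneg ha41 (sq_nonneg (k 0 0)), hp4, hposac]
  have hq : (k 0 1) ^ 2 ≤ 8 * (a ^ 2 + a * cc) * (1 + b ^ 2) := by
    nlinarith [mul_nonneg ha41 (sq_nonneg (k 0 1)), hq4, hposa2]
  have hr' : (k 1 0) ^ 2 ≤ 8 * (a ^ 2 + a * cc) * (1 + b ^ 2) := by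
    nlinarith [hr, hposac, sq_nonneg (a * b), mul_pos hQ hQ]
  have hs' : (k 1 1) ^ 2 ≤ 8 * (a ^ 2 + a * cc) * (1 + b ^ 2) := by
    nlinarith [hs, hposa2, mul_pos hQ hc, mul_nonneg (mul_nonneg hQ.le hc.le) (sq_nonneg b)]
  intro i _
  intro j _
  fin_cases i <;> fin_cases j <;>
    [exact abs_from_sq hB1 hp; exact abs_from_sq hB1 hq;
     exact abs_from_sq hB1 hr'; exact abs_from_sq hB1 hs']

end CNR



namespace CNR

def ψ (q : QF) : QF := (4 * q.1, 2 * q.2.1, q.2.2)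
def Sm : M2 := !![0,-1;1,0]
def cj (g : M2) : M2 := !![g 0 0, 2 * g 0 1; g 1 0 / 2, g 1 1]
def uc (h : M2) : M2 := !![h 0 0, h 0 1 / 2; 2 * h 1 0, h 1 1]

lemma psi_inj {a b : QF} (h : ψ a = ψ b) : a = b := by
  obtain ⟨a1, a2, a3⟩ := a
  obtain ⟨b1, b2, b3⟩ := b
  simp only [ψ, Prod.mk.injEq] at h
  refine Prod.ext ?_ (Prod.ext ?_ ?_) <;> simp <;> omega

lemma Sm_det : Sm.det = 1 := by simp [Sm, Matrix.det_fin_two_of]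

lemma fricke_psi (q : QF) : fricke4 (ψ q) = ψ (act q Sm) := by
  obtain ⟨a, b, cc⟩ := q
  have h4 : (4 * a) / 4 = a := by omega
  simp only [fricke4, ψ, act, Sm, ent00, ent01, ent10, ent11]
  refine Prod.ext ?_ (Prod.ext ?_ ?_)
  · simp
  · simp
  · simp [h4]

lemma uc_cj {g : M2} (h4 : (4:ℤ) ∣ g 1 0) : uc (cj g) = g := by
  ext i j
  fin_cases i <;> fin_cases j <;>
    simp [uc, cj, ent00, ent01, ent10, ent11] <;> omega

lemma cj_uc {h : M2} (h01 : (2:ℤ) ∣ h 0 1) : cj (uc h) = h := by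
  ext i j
  fin_cases i <;> fin_cases j <;>
    simp [uc, cj, ent00, ent01, ent10, ent11] <;> omega

lemma act_psi_cj (q : QF) {g : M2} (h4 : (4:ℤ) ∣ g 1 0) :
    act (ψ q) g = ψ (act q (cj g)) := by
  obtain ⟨r, hr⟩ := h4
  have h2 : (4 * r : ℤ) / 2 = 2 * r := by omega
  obtain ⟨a, b, cc⟩ := q
  simp only [act, ψ, cj, ent00, ent01, ent10, ent11, hr, h2]
  refine Prod.ext ?_ (Prod.ext ?_ ?_) <;> simp <;> ring

lemma cj_det {g : M2} (h4 : (4:ℤ) ∣ g 1 0) : (cj g).det = g.det := by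
  obtain ⟨r, hr⟩ := h4
  have h2 : (4 * r : ℤ) / 2 = 2 * r := by omega
  rw [Matrix.det_fin_two, Matrix.det_fin_two]
  simp only [cj, ent00, ent01, ent10, ent11, hr, h2]
  ring

lemma cj_parity {g : M2} (h4 : (4:ℤ) ∣ g 1 0) :
    2 ∣ (cj g) 0 1 ∧ 2 ∣ (cj g) 1 0 := by
  obtain ⟨r, hr⟩ := h4
  have h2 : (4 * r : ℤ) / 2 = 2 * r := by omega
  constructor
  · exact ⟨g 0 1, by simp [cj, ent01]⟩
  · exact ⟨r, by simp [cj, ent10, hr, h2]⟩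

lemma uc_mem {h : M2} (hdet : h.det = 1) (h01 : (2:ℤ) ∣ h 0 1) (h10 : (2:ℤ) ∣ h 1 0) :
    uc h ∈ Gamma0 4 := by
  obtain ⟨m, hm⟩ := h01
  rw [Matrix.det_fin_two] at hdet
  constructor
  · rw [Matrix.det_fin_two]
    simp only [uc, ent00, ent01, ent10, ent11, hm]
    have : 2 * m / 2 = m := by omega
    rw [this]
    linear_combination hdet + h 1 0 * hm
  · obtain ⟨n, hn⟩ := h10
    exact ⟨n, by simp [uc, ent10, hn]; ring⟩

end CNR

namespace CNR

lemma inv2_Sm : inv2 Sm = !![0,1;-1,0] := by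
  ext i j
  fin_cases i <;> fin_cases j <;> simp [inv2, Sm, ent00, ent01, ent10, ent11]

lemma g4_dvd {g : M2} (hg : g ∈ Gamma0 4) : (4:ℤ) ∣ g 1 0 := by
  have := hg.2
  simpa using this

lemma uc_mem' {h : M2} (hdet : h.det = 1) (h01 : (2:ℤ) ∣ h 0 1) (h10 : (2:ℤ) ∣ h 1 0) :
    (4:ℤ) ∣ (uc h) 1 0 := g4_dvd (uc_mem hdet h01 h10)

lemma not_both {h : M2} (hdet : h.det = 1) (he : (2:ℤ) ∣ h 0 1 ∧ (2:ℤ) ∣ h 1 0)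
    (ho : (2:ℤ) ∣ h 0 0 ∧ (2:ℤ) ∣ h 1 1) : False := by
  rw [Matrix.det_fin_two] at hdet
  have h2 : (2:ℤ) ∣ 1 := by
    rw [← hdet]
    exact dvd_sub (ho.1.mul_right _) (he.1.mul_right _)
  norm_num at h2

lemma reqStar_psi {a b : QF} : reqStar4 (ψ a) (ψ b) ↔ ∃ h, Gp h ∧ act a h = b := by
  constructor
  · rintro ⟨g, hg, hcase⟩
    have hg1 : g.det = 1 := hg.1
    have hg4 : (4:ℤ) ∣ g 1 0 := g4_dvd hg
    rcases hcase with hc | hc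
    · refine ⟨cj g, ⟨by rw [cj_det hg4, hg1], Or.inl (cj_parity hg4)⟩, ?_⟩
      apply psi_inj
      rw [← act_psi_cj a hg4, hc]
    · refine ⟨cj g * Sm, ⟨?_, Or.inr ?_⟩, ?_⟩
      · rw [Matrix.det_mul, cj_det hg4, hg1, Sm_det, one_mul]
      · constructor
        · have h1 := (cj_parity hg4).1
          have : (cj g * Sm) 0 0 = cj g 0 1 := by
            rw [mul_ent]
            simp [Sm, ent00, ent10]
          rwa [this]
        · have h2 := (cj_parity hg4).2
          have : (cj g * Sm) 1 1 = -(cj g 1 0) := by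
            rw [mul_ent]
            simp [Sm, ent01, ent11]
          rw [this]
          exact h2.neg_right
      · apply psi_inj
        rw [act_mul, ← fricke_psi, ← act_psi_cj a hg4, hc]
  · rintro ⟨h, ⟨hdet, hpar⟩, hact⟩
    rcases hpar with ⟨h1, h2⟩ | ⟨h1, h2⟩
    · refine ⟨uc h, uc_mem hdet h1 h2, Or.inl ?_⟩
      rw [act_psi_cj a (uc_mem' hdet h1 h2), cj_uc h1, hact]
    · have hS : (h * inv2 Sm).det = 1 := by
        rw [Matrix.det_mul, det_inv2, Sm_det, hdet, one_mul]
      have e01 : (h * inv2 Sm) 0 1 = h 0 0 := by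
        rw [mul_ent, inv2_Sm]
        simp [ent01, ent11]
      have e10 : (h * inv2 Sm) 1 0 = -(h 1 1) := by
        rw [mul_ent, inv2_Sm]
        simp [ent00, ent10]
      have p01 : (2:ℤ) ∣ (h * inv2 Sm) 0 1 := by rw [e01]; exact h1
      have p10 : (2:ℤ) ∣ (h * inv2 Sm) 1 0 := by rw [e10]; exact h2.neg_right
      refine ⟨uc (h * inv2 Sm), uc_mem hS p01 p10, Or.inr ?_⟩
      rw [act_psi_cj a (uc_mem' hS p01 p10), cj_uc p01, fricke_psi, ← act_mul,
        Matrix.mul_assoc, inv2_mul Sm Sm_det, Matrix.mul_one, hact]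

lemma natCard_eq_ncard {α : Type*} (p : α → Prop) :
    Nat.card {x // p x} = Set.ncard {x | p x} := by
  rw [← Nat.card_coe_set_eq]
  rfl

end CNR

namespace CNR

lemma stabStar_psi (q : QF) (hq1 : 0 < q.1) (hq2 : disc q < 0) :
    stabStarCard4 (ψ q) = ({h : M2 | Gp h ∧ act q h = q}).ncard := by
  have hfin := St_finite hq1 hq2
  have himg1 : cj '' {g : M2 | g ∈ Gamma0 4 ∧ act (ψ q) g = ψ q}
      = {h : M2 | ((h.det = 1 ∧ ((2:ℤ) ∣ h 0 1 ∧ (2:ℤ) ∣ h 1 0)) ∧ act q h = q)} := by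
    ext h
    constructor
    · rintro ⟨g, ⟨hg, hfix⟩, rfl⟩
      have hg4 := g4_dvd hg
      refine ⟨⟨by rw [cj_det hg4, hg.1], cj_parity hg4⟩, ?_⟩
      apply psi_inj
      rw [← act_psi_cj q hg4, hfix]
    · rintro ⟨⟨hdet, h01, h10⟩, hfix⟩
      refine ⟨uc h, ⟨uc_mem hdet h01 h10, ?_⟩, cj_uc h01⟩
      rw [act_psi_cj q (uc_mem' hdet h01 h10), cj_uc h01, hfix]
  have himg2 : (fun g => cj g * Sm) '' {g : M2 | g ∈ Gamma0 4 ∧ fricke4 (act (ψ q) g) = ψ q}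
      = {h : M2 | ((h.det = 1 ∧ ((2:ℤ) ∣ h 0 0 ∧ (2:ℤ) ∣ h 1 1)) ∧ act q h = q)} := by
    ext h
    constructor
    · rintro ⟨g, ⟨hg, hfix⟩, rfl⟩
      have hg4 := g4_dvd hg
      refine ⟨⟨by rw [Matrix.det_mul, cj_det hg4, hg.1, Sm_det, one_mul], ?_, ?_⟩, ?_⟩
      · show (2:ℤ) ∣ (cj g * Sm) 0 0
        have : (cj g * Sm) 0 0 = cj g 0 1 := by
          rw [mul_ent]; simp [Sm, ent00, ent10]
        rw [this]; exact (cj_parity hg4).1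
      · show (2:ℤ) ∣ (cj g * Sm) 1 1
        have : (cj g * Sm) 1 1 = -(cj g 1 0) := by
          rw [mul_ent]; simp [Sm, ent01, ent11]
        rw [this]; exact (cj_parity hg4).2.neg_right
      · show act q (cj g * Sm) = q
        apply psi_inj
        rw [act_mul, ← fricke_psi, ← act_psi_cj q hg4, hfix]
    · rintro ⟨⟨hdet, h00, h11⟩, hfix⟩
      have hS : (h * inv2 Sm).det = 1 := by
        rw [Matrix.det_mul, det_inv2, Sm_det, hdet, one_mul]
      have e01 : (h * inv2 Sm) 0 1 = h 0 0 := by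
        rw [mul_ent, inv2_Sm]; simp [ent01, ent11]
      have e10 : (h * inv2 Sm) 1 0 = -(h 1 1) := by
        rw [mul_ent, inv2_Sm]; simp [ent00, ent10]
      have p01 : (2:ℤ) ∣ (h * inv2 Sm) 0 1 := by rw [e01]; exact h00
      have p10 : (2:ℤ) ∣ (h * inv2 Sm) 1 0 := by rw [e10]; exact h11.neg_right
      refine ⟨uc (h * inv2 Sm), ⟨uc_mem hS p01 p10, ?_⟩, ?_⟩
      · rw [act_psi_cj q (uc_mem' hS p01 p10), cj_uc p01, fricke_psi, ← act_mul,
          Matrix.mul_assoc, inv2_mul Sm Sm_det, Matrix.mul_one, hfix]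
      · show cj (uc (h * inv2 Sm)) * Sm = h
        rw [cj_uc p01, Matrix.mul_assoc, inv2_mul Sm Sm_det, Matrix.mul_one]
  have hinj1 : Set.InjOn cj {g : M2 | g ∈ Gamma0 4 ∧ act (ψ q) g = ψ q} := by
    intro x hx y hy hxy
    have := congrArg uc hxy
    rwa [uc_cj (g4_dvd hx.1), uc_cj (g4_dvd hy.1)] at this
  have hinj2 : Set.InjOn (fun g => cj g * Sm)
      {g : M2 | g ∈ Gamma0 4 ∧ fricke4 (act (ψ q) g) = ψ q} := by
    intro x hx y hy hxy
    simp only at hxy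
    have h2 : cj x = cj y := by
      have := congrArg (fun m => m * inv2 Sm) hxy
      simpa [Matrix.mul_assoc, mul_inv2 Sm Sm_det] using this
    have := congrArg uc h2
    rwa [uc_cj (g4_dvd hx.1), uc_cj (g4_dvd hy.1)] at this
  have hU : {h : M2 | Gp h ∧ act q h = q}
      = {h : M2 | ((h.det = 1 ∧ ((2:ℤ) ∣ h 0 1 ∧ (2:ℤ) ∣ h 1 0)) ∧ act q h = q)}
        ∪ {h : M2 | ((h.det = 1 ∧ ((2:ℤ) ∣ h 0 0 ∧ (2:ℤ) ∣ h 1 1)) ∧ act q h = q)} := by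
    ext h
    simp only [Gp, Set.mem_setOf_eq, Set.mem_union]
    tauto
  have hdisj : Disjoint
      {h : M2 | ((h.det = 1 ∧ ((2:ℤ) ∣ h 0 1 ∧ (2:ℤ) ∣ h 1 0)) ∧ act q h = q)}
      {h : M2 | ((h.det = 1 ∧ ((2:ℤ) ∣ h 0 0 ∧ (2:ℤ) ∣ h 1 1)) ∧ act q h = q)} := by
    rw [Set.disjoint_left]
    rintro h ⟨⟨hdet, he⟩, -⟩ ⟨⟨-, ho⟩, -⟩
    exact not_both hdet he ho
  have hf1 : {h : M2 | ((h.det = 1 ∧ ((2:ℤ) ∣ h 0 1 ∧ (2:ℤ) ∣ h 1 0)) ∧ act q h = q)}.Finite :=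
    hfin.subset (by rintro h ⟨⟨hd, -⟩, hx⟩; exact ⟨hd, hx⟩)
  have hf2 : {h : M2 | ((h.det = 1 ∧ ((2:ℤ) ∣ h 0 0 ∧ (2:ℤ) ∣ h 1 1)) ∧ act q h = q)}.Finite :=
    hfin.subset (by rintro h ⟨⟨hd, -⟩, hx⟩; exact ⟨hd, hx⟩)
  calc stabStarCard4 (ψ q)
      = ({g : M2 | g ∈ Gamma0 4 ∧ act (ψ q) g = ψ q}).ncard
        + ({g : M2 | g ∈ Gamma0 4 ∧ fricke4 (act (ψ q) g) = ψ q}).ncard := by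
        unfold stabStarCard4
        rw [natCard_eq_ncard, natCard_eq_ncard]
    _ = ({h : M2 | ((h.det = 1 ∧ ((2:ℤ) ∣ h 0 1 ∧ (2:ℤ) ∣ h 1 0)) ∧ act q h = q)}).ncard
        + ({h : M2 | ((h.det = 1 ∧ ((2:ℤ) ∣ h 0 0 ∧ (2:ℤ) ∣ h 1 1)) ∧ act q h = q)}).ncard := by
        rw [← himg1, ← himg2, Set.ncard_image_of_injOn hinj1, Set.ncard_image_of_injOn hinj2]
    _ = ({h : M2 | Gp h ∧ act q h = q}).ncard := by
        rw [hU, Set.ncard_union_eq hdisj hf1 hf2]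

end CNR

namespace CNR

lemma S4_decomp {D : ℤ} {Q4 : QF} (h : Q4 ∈ QDN 4 (4 * D)) :
    ∃ q, Q4 = ψ q ∧ q ∈ QDN 1 D := by
  obtain ⟨hpos, hdvd, hdisc⟩ := h
  obtain ⟨a, ha⟩ : (4:ℤ) ∣ Q4.1 := by simpa using hdvd
  have hb : (2:ℤ) ∣ Q4.2.1 := by
    have h2 : Q4.2.1 ^ 2 = 4 * (Q4.1 * Q4.2.2 - D) := by
      simp only [disc] at hdisc
      linarith
    have : (2:ℤ) ∣ Q4.2.1 ^ 2 := ⟨2 * (Q4.1 * Q4.2.2 - D), by linarith⟩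
    exact (Int.Prime.dvd_pow' (by norm_num) this)
  obtain ⟨b, hbb⟩ := hb
  refine ⟨(a, b, Q4.2.2), ?_, ?_, ?_, ?_⟩
  · refine Prod.ext ?_ (Prod.ext ?_ ?_) <;> simp [ψ, ha, hbb]
  · show (0:ℤ) < a
    omega
  · simp
  · show disc (a, b, Q4.2.2) = -D
    simp only [disc] at hdisc ⊢
    rw [ha, hbb] at hdisc
    nlinarith [hdisc]

lemma psi_mem_S4 {D : ℤ} {q : QF} (h : q ∈ QDN 1 D) : ψ q ∈ QDN 4 (4 * D) := by
  obtain ⟨hpos, -, hdisc⟩ := h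
  refine ⟨by simp only [ψ]; linarith, ⟨q.1, by simp [ψ]⟩, ?_⟩
  simp only [disc, ψ] at hdisc ⊢
  linarith

lemma req1_iff (x y : QF) : req 1 x y ↔ ∃ g : M2, g.det = 1 ∧ act x g = y := by
  constructor
  · rintro ⟨g, hg, hact⟩
    exact ⟨g, hg.1, hact⟩
  · rintro ⟨g, hg, hact⟩
    exact ⟨g, ⟨hg, one_dvd _⟩, hact⟩

lemma mem_S1_act {D : ℤ} (hD : 0 < D) {q : QF} (h : q ∈ QDN 1 D) {g : M2} (hg : g.det = 1) :
    act q g ∈ QDN 1 D := by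
  obtain ⟨hpos, -, hdisc⟩ := h
  have hd : disc q < 0 := by rw [hdisc]; omega
  refine ⟨act_pos hpos hd hg, one_dvd _, ?_⟩
  rw [disc_act, hg]
  simpa using hdisc

end CNR

namespace CNR

def St (Q : QF) : Set M2 := {k | k.det = 1 ∧ act Q k = Q}

def As (Q : QF) (i j : Fin 3) : Set M2 :=
  {k | k ∈ St Q ∧ ∃ h, Gp h ∧ k * c j = c i * h}

lemma act_cancel {X Y : QF} {g : M2} (hg : g.det = 1) (h : act X g = act Y g) : X = Y := by
  have hX := act_inv2 X (act X g) g hg rfl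
  rw [h] at hX
  rw [← hX, act_inv2 Y (act Y g) g hg rfl]

lemma St_one (Q : QF) : (1 : M2) ∈ St Q := ⟨Matrix.det_one, act_one Q⟩

lemma St_mul {Q : QF} {k k' : M2} (h : k ∈ St Q) (h' : k' ∈ St Q) : k * k' ∈ St Q :=
  ⟨by rw [Matrix.det_mul, h.1, h'.1, one_mul],
   by rw [act_mul, h.2, h'.2]⟩

lemma St_inv2 {Q : QF} {k : M2} (h : k ∈ St Q) : inv2 k ∈ St Q := by
  refine ⟨by rw [det_inv2, h.1], ?_⟩
  have := act_inv2 Q Q k h.1 h.2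
  exact this

lemma As_one (Q : QF) (j : Fin 3) : (1 : M2) ∈ As Q j j :=
  ⟨St_one Q, 1, Gp_one, by rw [one_mul, mul_one]⟩

lemma As_card_eq {Q : QF} {i j : Fin 3} {k0 : M2} (hk0 : k0 ∈ As Q i j) :
    (As Q i j).ncard = (As Q j j).ncard := by
  obtain ⟨hk0St, h0, hh0, hch0⟩ := hk0
  have himg : (fun k => k0 * k) '' As Q j j = As Q i j := by
    ext k'
    constructor
    · rintro ⟨k, ⟨hkSt, h, hh, hch⟩, rfl⟩
      refine ⟨St_mul hk0St hkSt, h0 * h, Gp_mul hh0 hh, ?_⟩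
      rw [Matrix.mul_assoc, hch, ← Matrix.mul_assoc, hch0, Matrix.mul_assoc]
    · rintro ⟨hk'St, h', hh', hch'⟩
      refine ⟨inv2 k0 * k', ⟨St_mul (St_inv2 hk0St) hk'St, inv2 h0 * h', Gp_mul (Gp_inv2 hh0) hh', ?_⟩, ?_⟩
      · -- (inv2 k0 * k') * c j = c j * (inv2 h0 * h')
        have hci : c i = k0 * c j * inv2 h0 := by
          rw [hch0, Matrix.mul_assoc, mul_inv2 _ hh0.1, Matrix.mul_one]
        calc inv2 k0 * k' * c j = inv2 k0 * (k' * c j) := by rw [Matrix.mul_assoc]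
          _ = inv2 k0 * (c i * h') := by rw [hch']
          _ = inv2 k0 * (k0 * c j * inv2 h0 * h') := by rw [← hci]
          _ = c j * (inv2 h0 * h') := by
              rw [show k0 * c j * inv2 h0 * h' = k0 * (c j * (inv2 h0 * h')) by
                simp only [Matrix.mul_assoc], ← Matrix.mul_assoc, inv2_mul _ hk0St.1,
                Matrix.one_mul]
      · show k0 * (inv2 k0 * k') = k'
        rw [← Matrix.mul_assoc, mul_inv2 _ hk0St.1, Matrix.one_mul]
  rw [← himg]
  rw [Set.ncard_image_of_injOn]
  intro x _ y _ hxy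
  simp only at hxy
  have := congrArg (fun m => inv2 k0 * m) hxy
  simpa [← Matrix.mul_assoc, inv2_mul _ hk0St.1] using this

lemma St_partition {Q : QF} (hfin : (St Q).Finite) (j : Fin 3) :
    (St Q).ncard = (As Q 0 j).ncard + (As Q 1 j).ncard + (As Q 2 j).ncard := by
  have hsub : ∀ i, As Q i j ⊆ St Q := fun i k hk => hk.1
  have hcov : St Q = (As Q 0 j ∪ As Q 1 j) ∪ As Q 2 j := by
    ext k
    constructor
    · intro hk
      have hdet : (k * c j).det = 1 := by rw [Matrix.det_mul, hk.1, det_c, one_mul]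
      obtain ⟨i, hi, -⟩ := trichotomy (k * c j) hdet
      fin_cases i
      · exact Or.inl (Or.inl ⟨hk, hi⟩)
      · exact Or.inl (Or.inr ⟨hk, hi⟩)
      · exact Or.inr ⟨hk, hi⟩
    · rintro ((h | h) | h) <;> exact h.1
  have hdisj : ∀ i i' : Fin 3, i ≠ i' → Disjoint (As Q i j) (As Q i' j) := by
    intro i i' hne
    rw [Set.disjoint_left]
    rintro k ⟨hkSt, hex⟩ ⟨-, hex'⟩
    have hdet : (k * c j).det = 1 := by rw [Matrix.det_mul, hkSt.1, det_c, one_mul]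
    obtain ⟨i0, -, huni⟩ := trichotomy (k * c j) hdet
    exact hne ((huni i hex).trans (huni i' hex').symm)
  have hf : ∀ i, (As Q i j).Finite := fun i => hfin.subset (hsub i)
  rw [hcov,
    Set.ncard_union_eq
      (Set.disjoint_union_left.mpr ⟨hdisj 0 2 (by decide), hdisj 1 2 (by decide)⟩)
      ((hf 0).union (hf 1)) (hf 2),
    Set.ncard_union_eq (hdisj 0 1 (by decide)) (hf 0) (hf 1)]

end CNR

namespace CNR

lemma stab_conj {x y : QF} {h0 : M2} (hh0 : Gp h0) (hxy : act x h0 = y) :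
    {h : M2 | Gp h ∧ act y h = y}.ncard = {h : M2 | Gp h ∧ act x h = x}.ncard := by
  have hinvx : act y (inv2 h0) = x := act_inv2 x y h0 hh0.1 hxy
  have himg : (fun h => inv2 h0 * h * h0) '' {h : M2 | Gp h ∧ act x h = x}
      = {h : M2 | Gp h ∧ act y h = y} := by
    ext h'
    constructor
    · rintro ⟨h, ⟨hGp, hfix⟩, rfl⟩
      refine ⟨Gp_mul (Gp_mul (Gp_inv2 hh0) hGp) hh0, ?_⟩
      show act y (inv2 h0 * h * h0) = y
      rw [act_mul, act_mul, hinvx, hfix, hxy]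
    · rintro ⟨hGp, hfix⟩
      refine ⟨h0 * h' * inv2 h0, ⟨Gp_mul (Gp_mul hh0 hGp) (Gp_inv2 hh0), ?_⟩, ?_⟩
      · show act x (h0 * h' * inv2 h0) = x
        rw [act_mul, act_mul, hxy, hfix, hinvx]
      · show inv2 h0 * (h0 * h' * inv2 h0) * h0 = h'
        calc inv2 h0 * (h0 * h' * inv2 h0) * h0
            = (inv2 h0 * h0) * h' * (inv2 h0 * h0) := by simp only [Matrix.mul_assoc]
          _ = h' := by rw [inv2_mul _ hh0.1, Matrix.one_mul, Matrix.mul_one]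
  rw [← himg, Set.ncard_image_of_injOn]
  intro a _ b _ hab
  simp only at hab
  have := congrArg (fun m => h0 * m * inv2 h0) hab
  calc a = h0 * (inv2 h0 * a * h0) * inv2 h0 := by
        simp only [← Matrix.mul_assoc, mul_inv2 _ hh0.1, Matrix.one_mul]
        rw [Matrix.mul_assoc, mul_inv2 _ hh0.1, Matrix.mul_one]
    _ = h0 * (inv2 h0 * b * h0) * inv2 h0 := by rw [this]
    _ = b := by
        simp only [← Matrix.mul_assoc, mul_inv2 _ hh0.1, Matrix.one_mul]
        rw [Matrix.mul_assoc, mul_inv2 _ hh0.1, Matrix.mul_one]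

lemma stab_qf_eq_As (Q : QF) (i : Fin 3) :
    {h : M2 | Gp h ∧ act (act Q (c i)) h = act Q (c i)}.ncard = (As Q i i).ncard := by
  have himg : (fun h => c i * h * inv2 (c i)) '' {h : M2 | Gp h ∧ act (act Q (c i)) h = act Q (c i)}
      = As Q i i := by
    ext k
    constructor
    · rintro ⟨h, ⟨hGp, hfix⟩, rfl⟩
      have hkc : (c i * h * inv2 (c i)) * c i = c i * h := by
        rw [Matrix.mul_assoc, inv2_mul _ (det_c i), Matrix.mul_one]
      refine ⟨⟨?_, ?_⟩, h, hGp, hkc⟩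
      · rw [Matrix.det_mul, Matrix.det_mul, det_c, det_inv2, det_c, hGp.1]
        norm_num
      · apply act_cancel (det_c i)
        rw [← act_mul, hkc, act_mul, hfix]
    · rintro ⟨hkSt, h, hGp, hkc⟩
      refine ⟨h, ⟨hGp, ?_⟩, ?_⟩
      · rw [← act_mul, ← hkc, act_mul, hkSt.2]
      · show c i * h * inv2 (c i) = k
        rw [← hkc, Matrix.mul_assoc, mul_inv2 _ (det_c i), Matrix.mul_one]
  rw [← himg, Set.ncard_image_of_injOn]
  intro a _ b _ hab
  simp only at hab
  have h1 := congrArg (fun m => inv2 (c i) * m * c i) hab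
  calc a = inv2 (c i) * (c i * a * inv2 (c i)) * c i := by
        simp only [← Matrix.mul_assoc, inv2_mul _ (det_c i), Matrix.one_mul]
        rw [Matrix.mul_assoc, inv2_mul _ (det_c i), Matrix.mul_one]
    _ = inv2 (c i) * (c i * b * inv2 (c i)) * c i := by rw [h1]
    _ = b := by
        simp only [← Matrix.mul_assoc, inv2_mul _ (det_c i), Matrix.one_mul]
        rw [Matrix.mul_assoc, inv2_mul _ (det_c i), Matrix.mul_one]

lemma stabStar_orbit {D : ℤ} (hD : 0 < D) {Q : QF} (hQ : Q ∈ QDN 1 D) (i : Fin 3)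
    {bi : QF} {hi : M2} (hhi : Gp hi) (hbi : act (act Q (c i)) hi = bi) :
    stabStarCard4 (ψ bi) = (As Q i i).ncard := by
  have hqf : act Q (c i) ∈ QDN 1 D := mem_S1_act hD hQ (det_c i)
  have hbiS : bi ∈ QDN 1 D := hbi ▸ mem_S1_act hD hqf hhi.1
  rw [stabStar_psi bi hbiS.1 (by rw [hbiS.2.2]; omega), stab_conj hhi hbi]
  exact stab_qf_eq_As Q i

end CNR

namespace CNR

lemma perQ {D : ℤ} (hD : 0 < D) (R4 : Finset QF) (h4 : IsReps (QDN 4 (4*D)) reqStar4 R4)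
    {Q : QF} (hQ : Q ∈ QDN 1 D) (F : Finset QF)
    (hF : ∀ x, x ∈ F ↔ x ∈ R4 ∧ ∃ b, x = ψ b ∧ req 1 b Q) :
    ∑ Q4 ∈ F, (2:ℚ)/(stabStarCard4 Q4 : ℚ) = 3 * ((2:ℚ)/(stabCard 1 Q : ℚ)) := by
  classical
  have hQdisc : disc Q < 0 := by rw [hQ.2.2]; omega
  have hfin : (St Q).Finite := St_finite hQ.1 hQdisc
  have hqf : ∀ i : Fin 3, act Q (c i) ∈ QDN 1 D := fun i => mem_S1_act hD hQ (det_c i)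
  choose e he hu using fun i : Fin 3 => h4.2 (ψ (act Q (c i))) (psi_mem_S4 (hqf i))
  choose b hbe hbS using fun i : Fin 3 => S4_decomp (h4.1 (he i).1)
  choose hg hgGp hgact using fun i : Fin 3 =>
    (reqStar_psi.mp (by rw [← hbe i]; exact (he i).2 :
      reqStar4 (ψ (act Q (c i))) (ψ (b i))))
  -- K1
  have K1 : ∀ i j : Fin 3, (As Q i j).Nonempty → e i = e j := by
    rintro i j ⟨k, hkSt, h, hh, hch⟩
    have h1 : act (act Q (c i)) h = act Q (c j) := by
      rw [← act_mul, ← hch, act_mul, hkSt.2]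
    have h2 : act (act Q (c i)) (h * hg j) = b j := by rw [act_mul, h1, hgact j]
    have hrel : reqStar4 (ψ (act Q (c i))) (e j) := by
      rw [hbe j]
      exact reqStar_psi.mpr ⟨h * hg j, Gp_mul hh (hgGp j), h2⟩
    exact (hu i (e j) ⟨(he j).1, hrel⟩).symm
  -- K2
  have K2 : ∀ i j : Fin 3, e i = e j → (As Q i j).Nonempty := by
    intro i j heq
    have hbij : b i = b j := psi_inj (by rw [← hbe i, ← hbe j, heq])
    have hstep : act (act Q (c i)) (hg i * inv2 (hg j)) = act Q (c j) := by
      rw [act_mul, hgact i, hbij]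
      exact act_inv2 (act Q (c j)) (b j) (hg j) (hgGp j).1 (hgact j)
    have hGpt : Gp (hg i * inv2 (hg j)) := Gp_mul (hgGp i) (Gp_inv2 (hgGp j))
    refine ⟨c i * (hg i * inv2 (hg j)) * inv2 (c j), ⟨?_, ?_⟩, hg i * inv2 (hg j), hGpt, ?_⟩
    · rw [Matrix.det_mul, Matrix.det_mul, det_c, det_inv2, det_c, hGpt.1]
      norm_num
    · apply act_cancel (det_c j)
      rw [← act_mul, Matrix.mul_assoc, inv2_mul _ (det_c j), Matrix.mul_one, act_mul, hstep]
    · rw [Matrix.mul_assoc, inv2_mul _ (det_c j), Matrix.mul_one]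
  -- K3
  have K3 : ∀ i : Fin 3, stabStarCard4 (e i) = (As Q i i).ncard := by
    intro i
    rw [hbe i]
    exact stabStar_orbit hD hQ i (hgGp i) (hgact i)
  -- K4
  have K4 : ∀ i : Fin 3, e i ∈ F := by
    intro i
    rw [hF]
    refine ⟨(he i).1, b i, hbe i, ?_⟩
    have hbi : act Q (c i * hg i) = b i := by rw [act_mul, hgact i]
    have hdm : (c i * hg i).det = 1 := by
      rw [Matrix.det_mul, det_c, (hgGp i).1, one_mul]
    exact (req1_iff _ _).mpr ⟨inv2 (c i * hg i), by rw [det_inv2, hdm],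
      act_inv2 Q (b i) (c i * hg i) hdm hbi⟩
  -- K5
  have K5 : ∀ x ∈ F, x = e 0 ∨ x = e 1 ∨ x = e 2 := by
    intro x hx
    rw [hF] at hx
    obtain ⟨hxR4, b', hxb, hreq⟩ := hx
    obtain ⟨g, hgdet, hgact'⟩ := (req1_iff _ _).mp hreq
    have hb' : act Q (inv2 g) = b' := act_inv2 b' Q g hgdet hgact'
    obtain ⟨i, ⟨h, hGp, hcg⟩, -⟩ := trichotomy (inv2 g) (by rw [det_inv2, hgdet])
    have hb'2 : act (act Q (c i)) h = b' := by rw [← act_mul, ← hcg, hb']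
    have hrel : reqStar4 (ψ (act Q (c i))) x := by
      rw [hxb]
      exact reqStar_psi.mpr ⟨h, hGp, hb'2⟩
    have := hu i x ⟨hxR4, hrel⟩
    fin_cases i
    · exact Or.inl this
    · exact Or.inr (Or.inl this)
    · exact Or.inr (Or.inr this)
  -- K6
  have K6 : stabCard 1 Q = (St Q).ncard := by
    unfold stabCard
    rw [natCard_eq_ncard]
    congr 1
    ext g
    constructor
    · rintro ⟨hg, hfix⟩
      exact ⟨hg.1, hfix⟩
    · rintro ⟨hg, hfix⟩
      exact ⟨⟨hg, one_dvd _⟩, hfix⟩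
  have hAe : ∀ i j : Fin 3, e i = e j → (As Q i j).ncard = (As Q j j).ncard := by
    intro i j heq
    obtain ⟨k0, hk0⟩ := K2 i j heq
    exact As_card_eq hk0
  have hAn : ∀ i j : Fin 3, ¬(e i = e j) → (As Q i j).ncard = 0 := by
    intro i j heq
    have : As Q i j = ∅ := by
      rw [← Set.not_nonempty_iff_eq_empty]
      intro hne
      exact heq (K1 i j hne)
    rw [this, Set.ncard_empty]
  have hP := fun j => St_partition hfin j
  rw [K6]
  by_cases h01 : e 0 = e 1 <;> by_cases h02 : e 0 = e 2 <;> by_cases h12 : e 1 = e 2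
  · -- all equal
    have hFeq : F = {e 0} := by
      ext x
      simp only [Finset.mem_singleton]
      constructor
      · intro hx
        rcases K5 x hx with hh | hh | hh
        · exact hh
        · exact hh.trans h01.symm
        · exact hh.trans h02.symm
      · rintro rfl
        exact K4 0
    have hS : (St Q).ncard = 3 * (As Q 0 0).ncard := by
      have := hP 0
      rw [hAe 1 0 h01.symm, hAe 2 0 h02.symm] at this
      omega
    rw [hFeq, Finset.sum_singleton, K3 0, hS]
    rcases eq_or_ne (((As Q 0 0).ncard : ℚ)) 0 with hz | hz
    · push_cast
      simp [hz]
    · push_cast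
      field_simp
  · exact absurd (h01.symm.trans h02) h12
  · exact absurd (h01.trans h12) h02
  · -- e0 = e1 ≠ e2
    have hFeq : F = {e 0, e 2} := by
      ext x
      simp only [Finset.mem_insert, Finset.mem_singleton]
      constructor
      · intro hx
        rcases K5 x hx with hh | hh | hh
        · exact Or.inl hh
        · exact Or.inl (hh.trans h01.symm)
        · exact Or.inr hh
      · rintro (rfl | rfl)
        · exact K4 0
        · exact K4 2
    have hS2 : (St Q).ncard = 2 * (As Q 0 0).ncard := by
      have := hP 0
      rw [hAe 1 0 h01.symm, hAn 2 0 (fun hh => h02 hh.symm)] at this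
      omega
    have hS1 : (St Q).ncard = (As Q 2 2).ncard := by
      have := hP 2
      rw [hAn 0 2 h02, hAn 1 2 h12] at this
      omega
    rw [hFeq, Finset.sum_insert (by simp [h02]), Finset.sum_singleton, K3 0, K3 2, ← hS1, hS2]
    rcases eq_or_ne (((As Q 0 0).ncard : ℚ)) 0 with hz | hz
    · push_cast
      simp [hz]
    · push_cast
      field_simp
      ring
  · exact absurd (h02.trans h12.symm) h01
  · -- e0 = e2 ≠ e1
    have hFeq : F = {e 0, e 1} := by
      ext x
      simp only [Finset.mem_insert, Finset.mem_singleton]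
      constructor
      · intro hx
        rcases K5 x hx with hh | hh | hh
        · exact Or.inl hh
        · exact Or.inr hh
        · exact Or.inl (hh.trans h02.symm)
      · rintro (rfl | rfl)
        · exact K4 0
        · exact K4 1
    have hS2 : (St Q).ncard = 2 * (As Q 0 0).ncard := by
      have := hP 0
      rw [hAe 2 0 h02.symm, hAn 1 0 (fun hh => h01 hh.symm)] at this
      omega
    have hS1 : (St Q).ncard = (As Q 1 1).ncard := by
      have := hP 1
      rw [hAn 0 1 h01, hAn 2 1 (fun hh => h12 hh.symm)] at this
      omega
    rw [hFeq, Finset.sum_insert (by simp [h01]), Finset.sum_singleton, K3 0, K3 1, ← hS1, hS2]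
    rcases eq_or_ne (((As Q 0 0).ncard : ℚ)) 0 with hz | hz
    · push_cast
      simp [hz]
    · push_cast
      field_simp
      ring
  · -- e1 = e2 ≠ e0
    have hFeq : F = {e 0, e 1} := by
      ext x
      simp only [Finset.mem_insert, Finset.mem_singleton]
      constructor
      · intro hx
        rcases K5 x hx with hh | hh | hh
        · exact Or.inl hh
        · exact Or.inr hh
        · exact Or.inr (hh.trans h12.symm)
      · rintro (rfl | rfl)
        · exact K4 0
        · exact K4 1
    have hS2 : (St Q).ncard = 2 * (As Q 1 1).ncard := by
      have := hP 1
      rw [hAe 2 1 h12.symm, hAn 0 1 h01] at this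
      omega
    have hS1 : (St Q).ncard = (As Q 0 0).ncard := by
      have := hP 0
      rw [hAn 1 0 (fun hh => h01 hh.symm), hAn 2 0 (fun hh => h02 hh.symm)] at this
      omega
    rw [hFeq, Finset.sum_insert (by simp [h01]), Finset.sum_singleton, K3 0, K3 1, ← hS1, hS2]
    rcases eq_or_ne (((As Q 1 1).ncard : ℚ)) 0 with hz | hz
    · push_cast
      simp [hz]
    · push_cast
      field_simp
      ring
  · -- all distinct
    have hFeq : F = {e 0, e 1, e 2} := by
      ext x
      simp only [Finset.mem_insert, Finset.mem_singleton]
      constructor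
      · exact K5 x
      · rintro (rfl | rfl | rfl)
        · exact K4 0
        · exact K4 1
        · exact K4 2
    have hS0 : (St Q).ncard = (As Q 0 0).ncard := by
      have := hP 0
      rw [hAn 1 0 (fun hh => h01 hh.symm), hAn 2 0 (fun hh => h02 hh.symm)] at this
      omega
    have hS1 : (St Q).ncard = (As Q 1 1).ncard := by
      have := hP 1
      rw [hAn 0 1 h01, hAn 2 1 (fun hh => h12 hh.symm)] at this
      omega
    have hS2 : (St Q).ncard = (As Q 2 2).ncard := by
      have := hP 2
      rw [hAn 0 2 h02, hAn 1 2 h12] at this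
      omega
    rw [hFeq, Finset.sum_insert (by simp [h01, h02]), Finset.sum_insert (by simp [h12]),
      Finset.sum_singleton, K3 0, K3 1, K3 2, ← hS0, ← hS1, ← hS2]
    ring

end CNR


open CNR in
/-- `H₄^*(4D) = 3 H(D)`: the `Γ₀^*(4)`-class number of `Q_{4D,4}`, classes weighted by
the reciprocal of the stabilizer order (in the projective group, whence the factor `2`),
equals three times the Hurwitz class number `H(D)`. -/
theorem class_number_relation (D : ℕ) (hD : 0 < D) (hmod : D % 4 = 0 ∨ D % 4 = 3)
    (R1 R4 : Finset QF)
    (h1 : IsReps (QDN 1 (D : ℤ)) (req 1) R1)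
    (h4 : IsReps (QDN 4 (4 * D : ℤ)) reqStar4 R4) :
    ∑ Q ∈ R4, (2 : ℚ) / (stabStarCard4 Q : ℚ)
      = 3 * ∑ Q ∈ R1, (2 : ℚ) / (stabCard 1 Q : ℚ) := by
  classical
  have hDZ : 0 < (D : ℤ) := by exact_mod_cast hD
  calc ∑ x ∈ R4, (2 : ℚ) / (stabStarCard4 x : ℚ)
      = ∑ x ∈ R4, ∑ Q ∈ R1.filter (fun Q => ∃ b, x = ψ b ∧ req 1 b Q),
          (2 : ℚ) / (stabStarCard4 x : ℚ) := by
        refine Finset.sum_congr rfl fun x hx => ?_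
        obtain ⟨b, hxb, hbS⟩ := S4_decomp (h4.1 hx)
        obtain ⟨Q0, ⟨hQ0R, hQ0req⟩, hQ0uni⟩ := h1.2 b hbS
        have hfilter : R1.filter (fun Q => ∃ b', x = ψ b' ∧ req 1 b' Q) = {Q0} := by
          ext y
          simp only [Finset.mem_filter, Finset.mem_singleton]
          constructor
          · rintro ⟨hyR, b', hxb', hreq⟩
            have hbb : b' = b := psi_inj (by rw [← hxb, ← hxb'])
            exact hQ0uni y ⟨hyR, hbb ▸ hreq⟩
          · rintro rfl
            exact ⟨hQ0R, b, hxb, hQ0req⟩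
        rw [hfilter, Finset.sum_singleton]
    _ = ∑ x ∈ R4, ∑ Q ∈ R1,
          if (∃ b, x = ψ b ∧ req 1 b Q) then (2 : ℚ) / (stabStarCard4 x : ℚ) else 0 := by
        refine Finset.sum_congr rfl fun x _ => ?_
        rw [Finset.sum_filter]
    _ = ∑ Q ∈ R1, ∑ x ∈ R4,
          if (∃ b, x = ψ b ∧ req 1 b Q) then (2 : ℚ) / (stabStarCard4 x : ℚ) else 0 :=
        Finset.sum_comm
    _ = ∑ Q ∈ R1, ∑ x ∈ R4.filter (fun x => ∃ b, x = ψ b ∧ req 1 b Q),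
          (2 : ℚ) / (stabStarCard4 x : ℚ) := by
        refine Finset.sum_congr rfl fun Q _ => ?_
        rw [Finset.sum_filter]
    _ = ∑ Q ∈ R1, 3 * ((2 : ℚ) / (stabCard 1 Q : ℚ)) := by
        refine Finset.sum_congr rfl fun Q hQ => ?_
        exact perQ hDZ R4 h4 (h1.1 (Finset.mem_coe.mpr hQ))
          (R4.filter (fun x => ∃ b, x = ψ b ∧ req 1 b Q))
          (fun x => Finset.mem_filter)
    _ = 3 * ∑ Q ∈ R1, (2 : ℚ) / (stabCard 1 Q : ℚ) := by
        rw [Finset.mul_sum]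
end

section
/- Let m, N ≥ 1 be integers and let s be a complex number with Re(s) > 1. Then the product over primes p not dividing N of the (finite) local sums Σ_{k ≥ 0} u_m(p^k) p^{−2sk} converges and equals ζ(2s)^{−1} · ( ∏_{p | N} (1 − p^{−2s}) )^{−1} · σ_{1−2s}(m_N), where ζ is the Riemann zeta function. -/
/-!
Statement 6: For `Re(s) > 1`, the product over primes `p ∤ N` of the local sums
`Σ_{k ≥ 0} u_m(p^k) p^{−2sk}` converges and equals
`ζ(2s)⁻¹ · (∏_{p | N} (1 − p^{−2s}))⁻¹ · σ_{1−2s}(m_N)`.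
-/

/-- The Ramanujan sum `u_n(q)`, the sum of the `n`-th powers of the primitive
`q`-th roots of unity. -/
noncomputable def ramanujanSum (n q : ℕ) : ℂ :=
  ∑ x ∈ Finset.filter (fun k => Nat.Coprime k q) (Finset.range q),
    Complex.exp (2 * Real.pi * Complex.I * n * x / q)

/-- `m_N`: the largest divisor of `m` coprime to `N`. -/
def coprimePart (m N : ℕ) : ℕ :=
  ∏ p ∈ m.primeFactors.filter (fun p => ¬ p ∣ N), p ^ m.factorization p

open Finset Complex ArithmeticFunction EulerProduct

lemma exp_sum_full (n q : ℕ) (hq : 0 < q) :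
    ∑ x ∈ Finset.range q, Complex.exp (2 * Real.pi * Complex.I * n * x / q)
      = if q ∣ n then (q : ℂ) else 0 := by
  have hq0 : (q : ℂ) ≠ 0 := Nat.cast_ne_zero.mpr hq.ne'
  set z : ℂ := Complex.exp (2 * Real.pi * Complex.I * n / q) with hz
  have hterm : ∀ x : ℕ, Complex.exp (2 * Real.pi * Complex.I * n * x / q) = z ^ x := by
    intro x
    rw [hz, ← Complex.exp_nat_mul]
    congr 1
    ring
  simp only [hterm]
  by_cases hdvd : q ∣ n
  · obtain ⟨c, rfl⟩ := hdvd
    have hz1 : z = 1 := by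
      rw [hz, Complex.exp_eq_one_iff]
      refine ⟨c, ?_⟩
      push_cast
      field_simp
    simp [hz1]
  · have hz1 : z ≠ 1 := by
      intro h
      rw [hz, Complex.exp_eq_one_iff] at h
      obtain ⟨k, hk⟩ := h
      have h2 : (n : ℂ) = k * q := by
        have h2pi : (2 * Real.pi * Complex.I : ℂ) ≠ 0 := Complex.two_pi_I_ne_zero
        field_simp at hk
        have : 2 * (Real.pi:ℂ) * Complex.I * n = 2 * Real.pi * Complex.I * (k * q) := by
          rw [hk]; ring
        exact mul_left_cancel₀ h2pi this
      have h3 : (n : ℤ) = k * q := by exact_mod_cast h2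
      exact hdvd (Int.natCast_dvd_natCast.mp (Dvd.intro_left k h3.symm))
    rw [geom_sum_eq hz1]
    have hzq : z ^ q = 1 := by
      rw [hz, ← Complex.exp_nat_mul]
      have : (q : ℂ) * (2 * Real.pi * Complex.I * n / q) = n * (2 * Real.pi * Complex.I) := by
        field_simp
      rw [this]
      exact_mod_cast Complex.exp_int_mul_two_pi_mul_I n
    rw [hzq, if_neg hdvd, sub_self, zero_div]

lemma ramanujanSum_one (n : ℕ) : ramanujanSum n 1 = 1 := by
  simp [ramanujanSum]

lemma ramanujanSum_prime_pow {p : ℕ} (hp : p.Prime) (k n : ℕ) :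
    ramanujanSum n (p ^ (k + 1)) =
      (if p ^ (k + 1) ∣ n then ((p ^ (k + 1) : ℕ) : ℂ) else 0)
        - (if p ^ k ∣ n then ((p ^ k : ℕ) : ℂ) else 0) := by
  have hp0 : 0 < p := hp.pos
  have hppos : 0 < p ^ (k + 1) := pow_pos hp0 _
  have hfilter :
      Finset.filter (fun x => Nat.Coprime x (p ^ (k + 1))) (Finset.range (p ^ (k + 1)))
        = Finset.filter (fun x => ¬ p ∣ x) (Finset.range (p ^ (k + 1))) := by
    apply Finset.filter_congr
    intro x _
    show _ ↔ _
    rw [Nat.coprime_pow_right_iff (Nat.succ_pos k), Nat.coprime_comm]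
    exact hp.coprime_iff_not_dvd
  have hsplit := Finset.sum_filter_add_sum_filter_not (Finset.range (p ^ (k + 1)))
      (fun x => ¬ p ∣ x) (fun x => Complex.exp (2 * Real.pi * Complex.I * n * x / (p ^ (k + 1) : ℕ)))
  have hsub : ∑ x ∈ Finset.filter (fun x => ¬ ¬ p ∣ x) (Finset.range (p ^ (k + 1))),
        Complex.exp (2 * Real.pi * Complex.I * n * x / (p ^ (k + 1) : ℕ))
      = ∑ y ∈ Finset.range (p ^ k),
        Complex.exp (2 * Real.pi * Complex.I * n * y / (p ^ k : ℕ)) := by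
    refine Finset.sum_nbij' (fun x => x / p) (fun y => p * y) ?_ ?_ ?_ ?_ ?_
    · intro a ha
      simp only [Finset.mem_filter, Finset.mem_range, not_not] at ha
      refine Finset.mem_range.mpr ?_
      rw [Nat.div_lt_iff_lt_mul hp0, ← pow_succ]
      exact ha.1
    · intro a ha
      simp only [Finset.mem_range] at ha
      simp only [Finset.mem_filter, Finset.mem_range, not_not]
      exact ⟨by rw [pow_succ, mul_comm (p^k) p]; exact (Nat.mul_lt_mul_left hp0).mpr ha,
        Dvd.intro a rfl⟩
    · intro a ha
      simp only [Finset.mem_filter, not_not] at ha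
      exact Nat.mul_div_cancel' ha.2
    · intro a _
      exact Nat.mul_div_cancel_left a hp0
    · intro a ha
      simp only [Finset.mem_filter, Finset.mem_range, not_not] at ha
      obtain ⟨c, rfl⟩ := ha.2
      have hc : p * c / p = c := Nat.mul_div_cancel_left c hp0
      simp only [hc]
      have hpn0 : ((p : ℂ)) ≠ 0 := Nat.cast_ne_zero.mpr hp0.ne'
      have hpk0 : ((p : ℂ)) ^ k ≠ 0 := pow_ne_zero _ hpn0
      congr 1
      push_cast
      rw [pow_succ]
      field_simp
  rw [ramanujanSum, hfilter, eq_sub_of_add_eq (hsplit.trans (exp_sum_full n _ hppos)), hsub,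
    exp_sum_full n _ (pow_pos hp0 k)]

lemma local_factor_eq {m : ℕ} (hm : m ≠ 0) (s : ℂ) {p : ℕ} (hp : p.Prime) :
    (∑' k : ℕ, ramanujanSum m (p ^ k) * (p : ℂ) ^ (-(2 * s) * (k : ℂ)))
      = (1 - (p : ℂ) ^ (-(2 * s)))
          * ∑ j ∈ Finset.range (m.factorization p + 1), ((p ^ j : ℕ) : ℂ) ^ (1 - 2 * s) := by
  have hp0 : (p : ℂ) ≠ 0 := Nat.cast_ne_zero.mpr hp.pos.ne'
  set v := m.factorization p with hv
  set W : ℕ → ℂ := fun k => (p : ℂ) ^ (-(2 * s) * (k : ℂ)) with hW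
  set G : ℕ → ℂ := fun k => if p ^ k ∣ m then ((p ^ k : ℕ) : ℂ) ^ (1 - 2 * s) else 0 with hG
  have hdvd_iff : ∀ k : ℕ, p ^ k ∣ m ↔ k ≤ v := fun k =>
    (Nat.Prime.pow_dvd_iff_le_factorization hp hm)
  -- cast identity
  have cast_id : ∀ k : ℕ, ((p ^ k : ℕ) : ℂ) ^ (1 - 2 * s) = ((p ^ k : ℕ) : ℂ) * W k := by
    intro k
    have hpk : ((p ^ k : ℕ) : ℂ) ≠ 0 := Nat.cast_ne_zero.mpr (pow_pos hp.pos k).ne'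
    have he : (1 - 2 * s) = (1 : ℂ) + (-(2 * s)) := by ring
    rw [he, Complex.cpow_add _ _ hpk, Complex.cpow_one]
    congr 1
    have h2 := Complex.natCast_cpow_natCast_mul p k (-(2 * s))
    simp only [hW]
    rw [mul_comm (-(2*s)) (k:ℂ), h2]
    push_cast
    rfl
  -- W (k+1) = x * W k
  have hWsucc : ∀ k : ℕ, W (k + 1) = (p : ℂ) ^ (-(2 * s)) * W k := by
    intro k
    simp only [hW]
    rw [← Complex.cpow_add _ _ hp0]
    congr 1
    push_cast
    ring
  -- terms
  set T : ℕ → ℂ := fun k => ramanujanSum m (p ^ k) * W k with hT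
  have hT0 : T 0 = 1 := by
    simp only [hT, pow_zero]
    rw [ramanujanSum_one, hW]
    simp
  have hTsucc : ∀ k : ℕ, T (k + 1) = G (k + 1) - (p : ℂ) ^ (-(2 * s)) * G k := by
    intro k
    simp only [hT, hG, ramanujanSum_prime_pow hp k m]
    rw [hWsucc k]
    split_ifs with h1 h2 h2 <;>
      (try simp only [cast_id, hWsucc]) <;> ring
  -- vanishing beyond v+1
  have hvanish : ∀ k ∉ Finset.range (v + 2), T k = 0 := by
    intro k hk
    simp only [Finset.mem_range, not_lt] at hk
    obtain ⟨j, rfl⟩ : ∃ j, k = j + 1 := ⟨k - 1, by omega⟩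
    rw [hTsucc j]
    simp only [hG]
    rw [if_neg, if_neg]
    · ring
    · rw [hdvd_iff]; omega
    · rw [hdvd_iff]; omega
  rw [tsum_eq_sum hvanish]
  -- now finite computation
  have hGsum : ∀ k ∈ Finset.range (v + 1), G k = ((p ^ k : ℕ) : ℂ) ^ (1 - 2 * s) := by
    intro k hk
    simp only [Finset.mem_range] at hk
    simp only [hG]
    rw [if_pos ((hdvd_iff k).mpr (by omega))]
  have hGtop : G (v + 1) = 0 := by
    simp only [hG]
    rw [if_neg (by rw [hdvd_iff]; omega)]
  calc ∑ k ∈ Finset.range (v + 2), T k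
      = ∑ k ∈ Finset.range (v + 1), T (k + 1) + T 0 := Finset.sum_range_succ' T (v + 1)
    _ = (∑ k ∈ Finset.range (v + 1), G (k + 1))
          - (p : ℂ) ^ (-(2 * s)) * ∑ k ∈ Finset.range (v + 1), G k + 1 := by
        rw [hT0]
        congr 1
        rw [Finset.mul_sum, ← Finset.sum_sub_distrib]
        exact Finset.sum_congr rfl fun k _ => by rw [hTsucc k]
    _ = (∑ k ∈ Finset.range (v + 1), G k)
          - (p : ℂ) ^ (-(2 * s)) * ∑ k ∈ Finset.range (v + 1), G k := by
        have h1 : ∑ k ∈ Finset.range (v + 2), G k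
            = ∑ k ∈ Finset.range (v + 1), G (k + 1) + G 0 := Finset.sum_range_succ' G (v + 1)
        have h2 : ∑ k ∈ Finset.range (v + 2), G k
            = ∑ k ∈ Finset.range (v + 1), G k + G (v + 1) := Finset.sum_range_succ G (v + 1)
        have hG0 : G 0 = 1 := by
          rw [hG]; simp
        rw [hGtop, add_zero] at h2
        have : ∑ k ∈ Finset.range (v + 1), G (k + 1)
            = ∑ k ∈ Finset.range (v + 1), G k - 1 := by
          rw [← h2, h1, hG0]; ring
        rw [this]; ring
    _ = (1 - (p : ℂ) ^ (-(2 * s))) * ∑ j ∈ Finset.range (v + 1), ((p ^ j : ℕ) : ℂ) ^ (1 - 2 * s) := by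
        rw [Finset.sum_congr rfl hGsum]
        ring

noncomputable def cpowFn (w : ℂ) : ArithmeticFunction ℂ :=
  ⟨fun n => if n = 0 then 0 else (n : ℂ) ^ w, if_pos rfl⟩

lemma cpowFn_apply (w : ℂ) {n : ℕ} (hn : n ≠ 0) : cpowFn w n = (n : ℂ) ^ w := by
  simp [cpowFn, hn]

lemma cpowFn_isMultiplicative (w : ℂ) : (cpowFn w).IsMultiplicative := by
  constructor
  · simp [cpowFn]
  · intro a b hab
    rcases eq_or_ne a 0 with rfl | ha
    · simp [cpowFn]
    rcases eq_or_ne b 0 with rfl | hb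
    · simp [cpowFn]
    rw [cpowFn_apply w (Nat.mul_ne_zero ha hb), cpowFn_apply w ha, cpowFn_apply w hb]
    push_cast
    exact Complex.natCast_mul_natCast_cpow a b w

lemma sigma_eq (m N : ℕ) (w : ℂ) :
    ∑ d ∈ (coprimePart m N).divisors, (d : ℂ) ^ w
      = ∏ p ∈ m.primeFactors.filter (fun p => ¬ p ∣ N),
          ∑ j ∈ Finset.range (m.factorization p + 1), ((p ^ j : ℕ) : ℂ) ^ w := by
  set f : ArithmeticFunction ℂ := (ArithmeticFunction.zeta : ArithmeticFunction ℂ) * cpowFn w with hf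
  have hfmult : f.IsMultiplicative :=
    (isMultiplicative_zeta.natCast).mul (cpowFn_isMultiplicative w)
  have hfapply : ∀ n : ℕ, f n = ∑ d ∈ n.divisors, (d : ℂ) ^ w := by
    intro n
    rw [hf, coe_zeta_mul_apply]
    exact Finset.sum_congr rfl fun d hd =>
      cpowFn_apply w (Nat.pos_of_mem_divisors hd).ne'
  have hprime : ∀ p ∈ m.primeFactors.filter (fun p => ¬ p ∣ N), p.Prime := by
    intro p hp
    exact Nat.prime_of_mem_primeFactors (Finset.mem_filter.mp hp).1
  have hpair : ((m.primeFactors.filter (fun p => ¬ p ∣ N)) : Set ℕ).Pairwise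
      (Function.onFun Nat.Coprime fun p => p ^ m.factorization p) := by
    intro a ha b hb hab
    exact Nat.Coprime.pow _ _
      ((Nat.coprime_primes (hprime a ha) (hprime b hb)).mpr hab)
  calc ∑ d ∈ (coprimePart m N).divisors, (d : ℂ) ^ w
      = f (coprimePart m N) := (hfapply _).symm
    _ = ∏ p ∈ m.primeFactors.filter (fun p => ¬ p ∣ N), f (p ^ m.factorization p) :=
        IsMultiplicative.map_prod _ hfmult _ hpair
    _ = _ := by
        refine Finset.prod_congr rfl fun p hp => ?_
        rw [hfapply]
        rw [Nat.sum_divisors_prime_pow (hprime p hp)]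

lemma hasProd_one_sub_cpow {z : ℂ} (hz : 1 < z.re) :
    HasProd (fun q : Nat.Primes => 1 - (q : ℂ) ^ (-z)) ((riemannZeta z)⁻¹) := by
  set f : ℕ → ℂ := fun n => ((moebius n : ℤ) : ℂ) * (n : ℂ) ^ (-z) with hfdef
  have hf₀ : f 0 = 0 := by simp [hfdef]
  have hf₁ : f 1 = 1 := by simp [hfdef]
  have hmul : ∀ {a b : ℕ}, Nat.Coprime a b → f (a * b) = f a * f b := by
    intro a b hab
    rcases eq_or_ne a 0 with rfl | ha
    · simp [hfdef]
    rcases eq_or_ne b 0 with rfl | hb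
    · simp [hfdef]
    simp only [hfdef]
    rw [isMultiplicative_moebius.map_mul_of_coprime hab]
    push_cast
    rw [Complex.natCast_mul_natCast_cpow a b (-z)]
    ring
  have hsum : Summable (fun n => ‖f n‖) := by
    have hbase : Summable (fun n : ℕ => (n : ℝ) ^ (-z.re)) :=
      Real.summable_nat_rpow.mpr (by linarith)
    refine Summable.of_nonneg_of_le (fun n => norm_nonneg _) (fun n => ?_) hbase
    rcases eq_or_ne n 0 with rfl | hn
    · simp [hf₀]
      rw [Real.zero_rpow (by linarith)]
    have hpos : 0 < n := Nat.pos_of_ne_zero hn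
    simp only [hfdef, norm_mul]
    have h1 : ‖((moebius n : ℤ) : ℂ)‖ ≤ 1 := by
      rw [Complex.norm_intCast]
      exact_mod_cast abs_moebius_le_one (n := n)
    have h2 : ‖(n : ℂ) ^ (-z)‖ = (n : ℝ) ^ (-z.re) := by
      rw [Complex.norm_natCast_cpow_of_pos hpos, neg_re]
    calc ‖((moebius n : ℤ) : ℂ)‖ * ‖(n : ℂ) ^ (-z)‖
        ≤ 1 * ‖(n : ℂ) ^ (-z)‖ := by
          exact mul_le_mul_of_nonneg_right h1 (norm_nonneg _)
      _ = (n : ℝ) ^ (-z.re) := by rw [one_mul, h2]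
  have hprod := eulerProduct_hasProd hf₁ hmul hsum hf₀
  have hlocal : (fun p : Nat.Primes => ∑' e : ℕ, f ((p : ℕ) ^ e))
      = fun p : Nat.Primes => 1 - (p : ℂ) ^ (-z) := by
    funext p
    have hvanish : ∀ e ∉ Finset.range 2, f ((p : ℕ) ^ e) = 0 := by
      intro e he
      simp only [Finset.mem_range, not_lt] at he
      simp only [hfdef]
      rw [moebius_apply_prime_pow p.2 (by omega), if_neg (by omega)]
      simp
    rw [tsum_eq_sum hvanish]
    rw [Finset.sum_range_succ, Finset.sum_range_one]
    simp only [hfdef, pow_zero, pow_one]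
    rw [moebius_apply_one, moebius_apply_prime p.2]
    push_cast
    simp [Complex.one_cpow]
    ring
  have hvalue : (∑' n : ℕ, f n) = (riemannZeta z)⁻¹ := by
    have hterm : f = fun n => LSeries.term (fun k => ((moebius k : ℤ) : ℂ)) z n := by
      funext n
      rcases eq_or_ne n 0 with rfl | hn
      · simp [hf₀]
      rw [LSeries.term_of_ne_zero hn, hfdef]
      simp only []
      rw [Complex.cpow_neg, div_eq_mul_inv]
    have hL : (∑' n : ℕ, f n) = LSeries (fun k => ((moebius k : ℤ) : ℂ)) z := by
      rw [hterm]; rfl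
    have hmz := ArithmeticFunction.LSeries_zeta_mul_Lseries_moebius hz
    have hzeta := LSeries_zeta_eq_riemannZeta hz
    have hne := riemannZeta_ne_zero_of_one_lt_re hz
    rw [hzeta] at hmz
    rw [hL]
    field_simp
    linear_combination hmz
  rw [hlocal, hvalue] at hprod
  exact hprod

theorem euler_product_away_from_N (m N : ℕ) (hm : 0 < m) (hN : 0 < N)
    (s : ℂ) (hs : 1 < s.re) :
    Multipliable (fun p : {p : ℕ // p.Prime ∧ ¬ p ∣ N} =>
        ∑' k : ℕ, ramanujanSum m (p.1 ^ k) * (p.1 : ℂ) ^ (-(2 * s) * (k : ℂ)))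
    ∧ (∏' p : {p : ℕ // p.Prime ∧ ¬ p ∣ N},
          ∑' k : ℕ, ramanujanSum m (p.1 ^ k) * (p.1 : ℂ) ^ (-(2 * s) * (k : ℂ)))
        = (riemannZeta (2 * s))⁻¹
            * (∏ p ∈ N.primeFactors, (1 - (p : ℂ) ^ (-(2 * s))))⁻¹
            * ∑ d ∈ (coprimePart m N).divisors, (d : ℂ) ^ (1 - 2 * s) := by
  classical
  have hm' : m ≠ 0 := hm.ne'
  have hs2 : 1 < (2 * s).re := by
    have h : (2 * s).re = 2 * s.re := by simp [Complex.mul_re]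
    rw [h]; linarith
  set g : {p : ℕ // p.Prime ∧ ¬ p ∣ N} → ℂ := fun p => 1 - (p.1 : ℂ) ^ (-(2 * s)) with hgdef
  set h : {p : ℕ // p.Prime ∧ ¬ p ∣ N} → ℂ := fun p =>
    ∑ j ∈ Finset.range (m.factorization p.1 + 1), ((p.1 ^ j : ℕ) : ℂ) ^ (1 - 2 * s) with hhdef
  have hfun : (fun p : {p : ℕ // p.Prime ∧ ¬ p ∣ N} =>
      ∑' k : ℕ, ramanujanSum m (p.1 ^ k) * (p.1 : ℂ) ^ (-(2 * s) * (k : ℂ)))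
      = fun p => g p * h p := by
    funext p
    exact local_factor_eq hm' s p.2.1
  -- multipliability of g
  have hgmult : Multipliable g := by
    have hlog : Summable (fun p : {p : ℕ // p.Prime ∧ ¬ p ∣ N} => Complex.log (g p)) := by
      have hbase : Summable (fun n : ℕ => (3 / 2) * (n : ℝ) ^ (-(2 * s).re)) :=
        (Real.summable_nat_rpow.mpr (by linarith)).mul_left _
      have hsub : Summable (fun p : {p : ℕ // p.Prime ∧ ¬ p ∣ N} =>
          (3 / 2) * (p.1 : ℝ) ^ (-(2 * s).re)) :=
        hbase.comp_injective Subtype.val_injective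
      refine Summable.of_norm (Summable.of_nonneg_of_le (fun _ => norm_nonneg _)
        (fun p => ?_) hsub)
      have hx : ‖-((p.1 : ℂ) ^ (-(2 * s)))‖ ≤ 1 / 2 := by
        rw [norm_neg]
        exact Complex.norm_prime_cpow_le_one_half ⟨p.1, p.2.1⟩ hs2
      have hlog1 := Complex.norm_log_one_add_half_le_self hx
      have hgp : g p = 1 + -((p.1 : ℂ) ^ (-(2 * s))) := by rw [hgdef]; ring
      rw [hgp]
      refine hlog1.trans ?_
      rw [norm_neg]
      have : ‖(p.1 : ℂ) ^ (-(2 * s))‖ = (p.1 : ℝ) ^ (-(2 * s).re) := by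
        rw [Complex.norm_natCast_cpow_of_pos p.2.1.pos, neg_re]
      rw [this]
    exact Complex.multipliable_of_summable_log hlog
  -- multipliability of h and its value
  set S := m.primeFactors.filter (fun p => ¬ p ∣ N) with hSdef
  have hSmem : ∀ q ∈ S, q.Prime ∧ ¬ q ∣ N := fun q hq =>
    ⟨Nat.prime_of_mem_primeFactors (Finset.mem_filter.mp hq).1, (Finset.mem_filter.mp hq).2⟩
  set emb : {x // x ∈ S} → {p : ℕ // p.Prime ∧ ¬ p ∣ N} :=
    fun x => ⟨x.1, hSmem x.1 x.2⟩ with hembdef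
  have hembinj : Function.Injective emb := by
    intro a b hab
    exact Subtype.ext (show (emb a).1 = (emb b).1 from congrArg Subtype.val hab)
  set S' : Finset {p : ℕ // p.Prime ∧ ¬ p ∣ N} := S.attach.map ⟨emb, hembinj⟩ with hS'def
  have hh_one : ∀ p ∉ S', h p = 1 := by
    intro p hp
    have hpS : p.1 ∉ S := by
      intro hmem
      exact hp (Finset.mem_map.mpr ⟨⟨p.1, hmem⟩, Finset.mem_attach _ _, Subtype.ext rfl⟩)
    have hfac : m.factorization p.1 = 0 := by
      have : p.1 ∉ m.primeFactors := by
        intro hmem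
        exact hpS (Finset.mem_filter.mpr ⟨hmem, p.2.2⟩)
      rw [← Nat.support_factorization] at this
      exact Finsupp.notMem_support_iff.mp this
    rw [hhdef]
    simp only [hfac]
    simp
  have hhmult : Multipliable h := multipliable_of_ne_finset_one hh_one
  have hhval : ∏' p, h p
      = ∑ d ∈ (coprimePart m N).divisors, (d : ℂ) ^ (1 - 2 * s) := by
    rw [tprod_eq_prod hh_one, hS'def, Finset.prod_map, sigma_eq m N (1 - 2 * s)]
    have := Finset.prod_attach S (fun q =>
      ∑ j ∈ Finset.range (m.factorization q + 1), ((q ^ j : ℕ) : ℂ) ^ (1 - 2 * s))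
    rw [← this]
    rfl
  -- the finset of primes dividing N
  have hNne : N ≠ 0 := hN.ne'
  set embt : {x // x ∈ N.primeFactors} → Nat.Primes :=
    fun x => ⟨x.1, Nat.prime_of_mem_primeFactors x.2⟩ with hembtdef
  have hembtinj : Function.Injective embt := by
    intro a b hab
    exact Subtype.ext (show (embt a).1 = (embt b).1 from congrArg Subtype.val hab)
  set t : Finset Nat.Primes := N.primeFactors.attach.map ⟨embt, hembtinj⟩ with htdef
  have hmem_t : ∀ q : Nat.Primes, q ∈ t ↔ (q : ℕ) ∣ N := by
    intro q
    constructor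
    · intro hq
      obtain ⟨x, _, hx⟩ := Finset.mem_map.mp hq
      have : (q : ℕ) ∈ N.primeFactors := by rw [← hx]; exact x.2
      exact (Nat.mem_primeFactors.mp this).2.1
    · intro hq
      have hmem : (q : ℕ) ∈ N.primeFactors := Nat.mem_primeFactors.mpr ⟨q.2, hq, hNne⟩
      exact Finset.mem_map.mpr ⟨⟨(q : ℕ), hmem⟩, Finset.mem_attach _ _, Subtype.ext rfl⟩
  set G : Nat.Primes → ℂ := fun q => 1 - ((q : ℕ) : ℂ) ^ (-(2 * s)) with hGdef
  have hGprod : HasProd G ((riemannZeta (2 * s))⁻¹) := hasProd_one_sub_cpow hs2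
  -- equivalence between complement of t and our subtype
  let e : {x : Nat.Primes // x ∈ (↑t : Set Nat.Primes)ᶜ} ≃ {p : ℕ // p.Prime ∧ ¬ p ∣ N} :=
    { toFun := fun q => ⟨q.1.1, q.1.2, fun hd => q.2 (Finset.mem_coe.mpr ((hmem_t q.1).mpr hd))⟩
      invFun := fun p => ⟨⟨p.1, p.2.1⟩,
        fun hmem => p.2.2 ((hmem_t ⟨p.1, p.2.1⟩).mp (Finset.mem_coe.mp hmem))⟩
      left_inv := fun q => Subtype.ext (Subtype.ext rfl)
      right_inv := fun p => rfl }
  have hcompG : (fun q : {x : Nat.Primes // x ∈ (↑t : Set Nat.Primes)ᶜ} => G q.1) = g ∘ e := rfl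
  have hcompl_mult : Multipliable ((G ∘ (↑)) : {x : Nat.Primes // x ∈ (↑t : Set Nat.Primes)ᶜ} → ℂ) := by
    have := (Equiv.multipliable_iff e (f := g)).mpr hgmult
    exact this
  have ht_mult : Multipliable ((G ∘ (↑)) : {x : Nat.Primes // x ∈ (↑t : Set Nat.Primes)} → ℂ) :=
    (t.hasProd G).multipliable
  have hsplit := Multipliable.tprod_mul_tprod_compl (f := G) (s := (↑t : Set Nat.Primes)) ht_mult hcompl_mult
  rw [hGprod.tprod_eq] at hsplit
  have htval : (∏' x : (↑t : Set Nat.Primes), G x)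
      = ∏ p ∈ N.primeFactors, (1 - (p : ℂ) ^ (-(2 * s))) := by
    rw [t.tprod_subtype' G, htdef, Finset.prod_map]
    have := Finset.prod_attach N.primeFactors (fun p => 1 - ((p : ℕ) : ℂ) ^ (-(2 * s)))
    rw [← this]
    rfl
  have hcomplval : (∏' x : ↑(↑t : Set Nat.Primes)ᶜ, G x) = ∏' p, g p := by
    rw [← Equiv.tprod_eq e g]
    rfl
  have hprodN_ne : ∏ p ∈ N.primeFactors, (1 - (p : ℂ) ^ (-(2 * s))) ≠ 0 :=
    Finset.prod_ne_zero_iff.mpr fun p hp =>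
      Complex.one_sub_prime_cpow_ne_zero (Nat.prime_of_mem_primeFactors hp) hs2
  have hgval : ∏' p, g p
      = (riemannZeta (2 * s))⁻¹ * (∏ p ∈ N.primeFactors, (1 - (p : ℂ) ^ (-(2 * s))))⁻¹ := by
    rw [htval, hcomplval] at hsplit
    have hstep : (∏' p, g p)
        = (∏ p ∈ N.primeFactors, (1 - (p : ℂ) ^ (-(2 * s))))⁻¹
            * ((∏ p ∈ N.primeFactors, (1 - (p : ℂ) ^ (-(2 * s)))) * ∏' p, g p) := by
      rw [← mul_assoc, inv_mul_cancel₀ hprodN_ne, one_mul]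
    rw [hstep, hsplit]
    ring
  constructor
  · rw [hfun]
    exact hgmult.mul hhmult
  · rw [hfun]
    rw [Multipliable.tprod_mul hgmult hhmult, hgval, hhval]
end

section
/- Let m, N ≥ 1 with gcd(m, N) = 1. Then the explicit constant −c_m of Theorem 'cons' satisfies −c_m = 24 (m/m_N) σ(m_N) ( ∏_{p|N} (1 − p^{−2}) )^{−1} Σ_{e‖N} (1/e) ∏_{p|N/e} δ_e(p) p^{1−β_{e,p}} ((1 − p^{β_{e,p}−α_p−2})(1+p^{−1}) − 1) = 24 σ(m) · ( Σ_{e‖N} μ(N/e)·e ) / ( N² ∏_{p|N} (1 − p^{−2}) ), where μ is the Möbius function. In particular, c_m = σ(m)·c_1 whenever gcd(m, N) = 1. -/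
/-- The explicit constant `−c_m` of Theorem `cons`:
`24 (m/m_N) σ(m_N) (∏_{p|N}(1 − p^{−2}))⁻¹ Σ_{e‖N} (1/e) ∏_{p|N/e} δ_e(p) p^{1−β_{e,p}}
((1 − p^{β_{e,p}−α_p−2})(1 + p^{−1}) − 1)`. -/
noncomputable def minusCm (m N : ℕ) : ℝ :=
  24 * ((m / coprimePart m N : ℕ) : ℝ)
    * ((∑ d ∈ (coprimePart m N).divisors, d : ℕ) : ℝ)
    * (∏ p ∈ N.primeFactors, (1 - (p : ℝ) ^ (-2 : ℤ)))⁻¹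
    * ∑ e ∈ N.divisors.filter (fun e => Nat.Coprime e (N / e)),
        (1 / (e : ℝ)) *
          ∏ p ∈ (N / e).primeFactors,
            (if (N / e).factorization p ≤ m.factorization p + 1 then (1 : ℝ) else 0)
              * (p : ℝ) ^ ((1 : ℤ) - ((N / e).factorization p : ℤ))
              * ((1 - (p : ℝ) ^ (((N / e).factorization p : ℤ) - (m.factorization p : ℤ) - 2))
                  * (1 + (p : ℝ)⁻¹) - 1)

lemma coprimePart_eq_self (m N : ℕ) (hm : m ≠ 0) (h : Nat.Coprime m N) :
    coprimePart m N = m := by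
  unfold coprimePart
  rw [Finset.filter_true_of_mem]
  · conv_rhs => rw [← Nat.factorization_prod_pow_eq_self hm]
    rfl
  · intro p hp hpN
    have hp' := Nat.prime_of_mem_primeFactors hp
    have hd : p ∣ Nat.gcd m N := Nat.dvd_gcd (Nat.dvd_of_mem_primeFactors hp) hpN
    rw [h] at hd
    exact Nat.Prime.one_lt hp' |>.ne' (Nat.dvd_one.mp hd)

/-- Key computation: if all `α_p = 0`, the inner product equals `μ(n) / n²`. -/
lemma inner_prod_eq (m n : ℕ) (hn : n ≠ 0) (hα : ∀ p ∈ n.primeFactors, m.factorization p = 0) :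
    (∏ p ∈ n.primeFactors,
        (if n.factorization p ≤ m.factorization p + 1 then (1 : ℝ) else 0)
          * (p : ℝ) ^ ((1 : ℤ) - (n.factorization p : ℤ))
          * ((1 - (p : ℝ) ^ ((n.factorization p : ℤ) - (m.factorization p : ℤ) - 2))
              * (1 + (p : ℝ)⁻¹) - 1))
      = ((ArithmeticFunction.moebius n : ℤ) : ℝ) * ((n : ℝ) ^ 2)⁻¹ := by
  by_cases hsq : Squarefree n
  · have hfac : ∀ p ∈ n.primeFactors, n.factorization p = 1 := fun p hp =>
      Nat.factorization_eq_one_of_squarefree hsq (Nat.prime_of_mem_primeFactors hp)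
        (Nat.dvd_of_mem_primeFactors hp)
    have step : ∀ p ∈ n.primeFactors,
        (if n.factorization p ≤ m.factorization p + 1 then (1 : ℝ) else 0)
          * (p : ℝ) ^ ((1 : ℤ) - (n.factorization p : ℤ))
          * ((1 - (p : ℝ) ^ ((n.factorization p : ℤ) - (m.factorization p : ℤ) - 2))
              * (1 + (p : ℝ)⁻¹) - 1)
          = (-1) * (((p : ℝ)) ^ 2)⁻¹ := by
      intro p hp
      have hp0 : (p : ℝ) ≠ 0 := by
        exact_mod_cast (Nat.prime_of_mem_primeFactors hp).ne_zero
      rw [hα p hp, hfac p hp]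
      norm_num
      field_simp
      ring
    have hprod : (∏ p ∈ n.primeFactors, (p : ℝ)) = (n : ℝ) := by
      rw [← Nat.cast_prod, Nat.prod_primeFactors_of_squarefree hsq]
    have hcard : n.primeFactors.card = ArithmeticFunction.cardFactors n := by
      rw [← ArithmeticFunction.cardDistinctFactors_eq_cardFactors_iff_squarefree hn |>.mpr hsq,
        ArithmeticFunction.cardDistinctFactors_apply, Nat.primeFactors, List.card_toFinset]
    rw [Finset.prod_congr rfl step, Finset.prod_mul_distrib, Finset.prod_const,
      Finset.prod_inv_distrib, Finset.prod_pow, hprod, hcard,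
      ArithmeticFunction.moebius_apply_of_squarefree hsq]
    push_cast
    ring
  · have hsq' := hsq
    rw [Nat.squarefree_iff_prime_squarefree] at hsq'
    push_neg at hsq'
    obtain ⟨p, hp', hp2⟩ := hsq'
    have hp : Nat.Prime p := hp'
    have hpmem : p ∈ n.primeFactors :=
      Nat.mem_primeFactors.mpr ⟨hp, dvd_trans (dvd_mul_right p p) hp2, hn⟩
    have hβ : 2 ≤ n.factorization p := by
      have := (Nat.Prime.pow_dvd_iff_le_factorization hp (n := n) (k := 2) hn).mp
        (by rwa [sq])
      exact this
    have hzero : (if n.factorization p ≤ m.factorization p + 1 then (1 : ℝ) else 0)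
          * (p : ℝ) ^ ((1 : ℤ) - (n.factorization p : ℤ))
          * ((1 - (p : ℝ) ^ ((n.factorization p : ℤ) - (m.factorization p : ℤ) - 2))
              * (1 + (p : ℝ)⁻¹) - 1) = 0 := by
      rw [hα p hpmem, if_neg (by omega)]
      ring
    rw [Finset.prod_eq_zero hpmem hzero,
      ArithmeticFunction.moebius_eq_zero_of_not_squarefree (by exact hsq)]
    simp

theorem minusCm_coprime (m N : ℕ) (hm : 0 < m) (hN : 0 < N) (h : Nat.Coprime m N) :
    minusCm m N
        = 24 * ((∑ d ∈ m.divisors, d : ℕ) : ℝ)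
            * (∑ e ∈ N.divisors.filter (fun e => Nat.Coprime e (N / e)),
                ((ArithmeticFunction.moebius (N / e) : ℤ) : ℝ) * (e : ℝ))
            / ((N : ℝ) ^ 2 * ∏ p ∈ N.primeFactors, (1 - (p : ℝ) ^ (-2 : ℤ)))
    ∧ minusCm m N = ((∑ d ∈ m.divisors, d : ℕ) : ℝ) * minusCm 1 N := by
  have key : ∀ m' : ℕ, 0 < m' → Nat.Coprime m' N → minusCm m' N
      = 24 * ((∑ d ∈ m'.divisors, d : ℕ) : ℝ)
          * (∑ e ∈ N.divisors.filter (fun e => Nat.Coprime e (N / e)),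
              ((ArithmeticFunction.moebius (N / e) : ℤ) : ℝ) * (e : ℝ))
          / ((N : ℝ) ^ 2 * ∏ p ∈ N.primeFactors, (1 - (p : ℝ) ^ (-2 : ℤ))) := by
    intro m' hm' h'
    have hcp := coprimePart_eq_self m' N hm'.ne' h'
    have hsum : ∀ e ∈ N.divisors.filter (fun e => Nat.Coprime e (N / e)),
        (1 / (e : ℝ)) *
          ∏ p ∈ (N / e).primeFactors,
            (if (N / e).factorization p ≤ m'.factorization p + 1 then (1 : ℝ) else 0)
              * (p : ℝ) ^ ((1 : ℤ) - ((N / e).factorization p : ℤ))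
              * ((1 - (p : ℝ) ^ (((N / e).factorization p : ℤ) - (m'.factorization p : ℤ) - 2))
                  * (1 + (p : ℝ)⁻¹) - 1)
        = ((ArithmeticFunction.moebius (N / e) : ℤ) : ℝ) * (e : ℝ) / (N : ℝ) ^ 2 := by
      intro e he
      rw [Finset.mem_filter, Nat.mem_divisors] at he
      obtain ⟨⟨hdvd, _⟩, _⟩ := he
      have he0 : e ≠ 0 := fun h0 => hN.ne' (by simpa [h0] using hdvd)
      have hNe0 : N / e ≠ 0 :=
        (Nat.div_pos (Nat.le_of_dvd hN hdvd) (Nat.pos_of_ne_zero he0)).ne'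
      have hα : ∀ p ∈ (N / e).primeFactors, m'.factorization p = 0 := by
        intro p hp
        apply Nat.factorization_eq_zero_of_not_dvd
        intro hpm
        have hpN : p ∣ N := (Nat.dvd_of_mem_primeFactors hp).trans (Nat.div_dvd_of_dvd hdvd)
        have : p ∣ Nat.gcd m' N := Nat.dvd_gcd hpm hpN
        rw [h'] at this
        exact (Nat.prime_of_mem_primeFactors hp).one_lt.ne' (Nat.dvd_one.mp this)
      rw [inner_prod_eq m' (N / e) hNe0 hα]
      have hmul : (e : ℝ) * ((N / e : ℕ) : ℝ) = (N : ℝ) := by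
        rw [← Nat.cast_mul, Nat.mul_div_cancel' hdvd]
      have he0' : (e : ℝ) ≠ 0 := Nat.cast_ne_zero.mpr he0
      have hNe0' : ((N / e : ℕ) : ℝ) ≠ 0 := Nat.cast_ne_zero.mpr hNe0
      rw [← hmul]
      field_simp
    unfold minusCm
    rw [hcp, Nat.div_self hm', Finset.sum_congr rfl hsum, ← Finset.sum_div]
    rw [div_eq_mul_inv, div_eq_mul_inv, mul_inv]
    push_cast
    ring
  refine ⟨key m hm h, ?_⟩
  rw [key m hm h, key 1 one_pos (Nat.coprime_one_left N)]
  norm_num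
  ring
end

section
/- The set Q_{20,45,40} of positive definite integral binary quadratic forms [45a, b, c] of discriminant b² − 180ac = −20 with b ≡ 40 (mod 90) decomposes into exactly two orbits under the action of Γ_0(45), represented by the forms [405, 40, 1] and [90, −50, 7]. -/
/-- `Q_{D,N,β}`: positive definite forms `[N a, b, c]` of discriminant `-D` with
middle coefficient `≡ β (mod 2N)`. -/
def QDNbeta (N : ℕ) (D β : ℤ) : Set QF :=
  {Q | 0 < Q.1 ∧ (N : ℤ) ∣ Q.1 ∧ disc Q = -D ∧ (2 * N : ℤ) ∣ Q.2.1 - β}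

-- ===== auxiliary machinery =====

/-- Evaluation of a form at a vector. -/
def evalQ (Q : QF) (x y : ℤ) : ℤ := Q.1 * x ^ 2 + Q.2.1 * x * y + Q.2.2 * y ^ 2

lemma act_eval (Q : QF) (g : Matrix (Fin 2) (Fin 2) ℤ) (x y : ℤ) :
    evalQ (act Q g) x y = evalQ Q (g 0 0 * x + g 0 1 * y) (g 1 0 * x + g 1 1 * y) := by
  simp only [evalQ, act]; ring

lemma act_mk (Q : QF) (p q r s : ℤ) :
    act Q !![p, q; r, s] =
      (Q.1 * p ^ 2 + Q.2.1 * p * r + Q.2.2 * r ^ 2,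
       2 * Q.1 * p * q + Q.2.1 * (p * s + q * r) + 2 * Q.2.2 * r * s,
       Q.1 * q ^ 2 + Q.2.1 * q * s + Q.2.2 * s ^ 2) := by
  simp only [act, Prod.mk.injEq, Matrix.of_apply, Matrix.cons_val', Matrix.cons_val_zero,
    Matrix.cons_val_one, Matrix.head_cons, Matrix.empty_val', Matrix.cons_val_fin_one,
    Matrix.head_fin_const]

lemma entry00 (p q r s : ℤ) : (!![p, q; r, s]) 0 0 = p := by simp
lemma entry01 (p q r s : ℤ) : (!![p, q; r, s]) 0 1 = q := by simp
lemma entry10 (p q r s : ℤ) : (!![p, q; r, s]) 1 0 = r := by simp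
lemma entry11 (p q r s : ℤ) : (!![p, q; r, s]) 1 1 = s := by simp

lemma disc_act (Q : QF) (g : Matrix (Fin 2) (Fin 2) ℤ) (h : g.det = 1) :
    disc (act Q g) = disc Q := by
  rw [Matrix.det_fin_two] at h
  simp only [disc, act]
  linear_combination (g 0 0 * g 1 1 - g 0 1 * g 1 0 + 1) * (Q.2.1 ^ 2 - 4 * Q.1 * Q.2.2) * h

lemma mul_entry (g h : Matrix (Fin 2) (Fin 2) ℤ) (i j : Fin 2) :
    (g * h) i j = g i 0 * h 0 j + g i 1 * h 1 j := by
  rw [Matrix.mul_apply, Fin.sum_univ_two]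

lemma act_mul (Q : QF) (g h : Matrix (Fin 2) (Fin 2) ℤ) :
    act (act Q g) h = act Q (g * h) := by
  simp only [act, mul_entry, Prod.mk.injEq]
  refine ⟨by ring, by ring, by ring⟩

lemma Gamma0_mul {N : ℕ} {g h : Matrix (Fin 2) (Fin 2) ℤ}
    (hg : g ∈ Gamma0 N) (hh : h ∈ Gamma0 N) : g * h ∈ Gamma0 N := by
  obtain ⟨hg1, hg2⟩ := hg; obtain ⟨hh1, hh2⟩ := hh
  refine ⟨by rw [Matrix.det_mul, hg1, hh1, one_mul], ?_⟩
  rw [mul_entry]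
  exact dvd_add (Dvd.dvd.mul_right hg2 _) (Dvd.dvd.mul_left hh2 _)

lemma req_trans {N : ℕ} {Q Q' Q'' : QF} (h1 : req N Q Q') (h2 : req N Q' Q'') :
    req N Q Q'' := by
  obtain ⟨g, hg, hQg⟩ := h1; obtain ⟨h, hh, hQh⟩ := h2
  exact ⟨g * h, Gamma0_mul hg hh, by rw [← act_mul, hQg, hQh]⟩

lemma evalQ_pos {Q : QF} (hA : 0 < Q.1) (hd : disc Q < 0) {x y : ℤ}
    (hxy : ¬(x = 0 ∧ y = 0)) : 0 < evalQ Q x y := by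
  have key : 4 * Q.1 * evalQ Q x y = (2 * Q.1 * x + Q.2.1 * y) ^ 2 - disc Q * y ^ 2 := by
    simp only [evalQ, disc]; ring
  rcases eq_or_ne y 0 with hy | hy
  · have hx : x ≠ 0 := by tauto
    have : 0 < Q.1 * x ^ 2 := mul_pos hA (by positivity)
    simp only [evalQ, hy]
    nlinarith
  · have h1 : 0 < (2 * Q.1 * x + Q.2.1 * y) ^ 2 - disc Q * y ^ 2 := by
      have : 0 < y ^ 2 := by positivity
      nlinarith [sq_nonneg (2 * Q.1 * x + Q.2.1 * y)]
    nlinarith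

lemma mem_act {Q : QF} (hQ : Q ∈ QDNbeta 45 20 40) {g : Matrix (Fin 2) (Fin 2) ℤ}
    (hg : g ∈ Gamma0 45) : act Q g ∈ QDNbeta 45 20 40 := by
  obtain ⟨hA, ⟨a, ha⟩, hdisc, ⟨k, hk⟩⟩ := hQ
  obtain ⟨hdet0, ⟨t, ht⟩⟩ := hg
  have hdet := hdet0
  rw [Matrix.det_fin_two] at hdet
  refine ⟨?_, ?_, ?_, ?_⟩
  · have hnz : ¬(g 0 0 = 0 ∧ g 1 0 = 0) := by
      rintro ⟨h1, h2⟩; rw [h1, h2] at hdet; simp at hdet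
    have := evalQ_pos hA (by rw [hdisc]; norm_num) hnz
    simpa [evalQ, act] using this
  · exact ⟨a * g 0 0 ^ 2 + Q.2.1 * g 0 0 * t + Q.2.2 * 45 * t ^ 2, by
      show Q.1 * g 0 0 ^ 2 + Q.2.1 * g 0 0 * g 1 0 + Q.2.2 * g 1 0 ^ 2 = _
      rw [ha, ht]; push_cast; ring⟩
  · rw [disc_act Q g hdet0, hdisc]
  · refine ⟨a * g 0 0 * g 0 1 + Q.2.1 * g 0 1 * t + Q.2.2 * t * g 1 1 + k, ?_⟩
    show 2 * Q.1 * g 0 0 * g 0 1 + Q.2.1 * (g 0 0 * g 1 1 + g 0 1 * g 1 0) +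
      2 * Q.2.2 * g 1 0 * g 1 1 - 40 = _
    have hb : Q.2.1 = 90 * k + 40 := by push_cast at hk; linarith
    rw [ht] at hdet
    rw [ha, ht, hb]
    push_cast
    linear_combination (90 * k + 40) * hdet

lemma lagrange : ∀ (n : ℕ) (G : QF), G.1.toNat ≤ n → 0 < G.1 → disc G = -40500 →
    ∃ h : Matrix (Fin 2) (Fin 2) ℤ, h.det = 1 ∧
      |(act G h).2.1| ≤ (act G h).1 ∧ (act G h).1 ≤ (act G h).2.2 := by
  intro n
  induction n with
  | zero => intro G hle hpos _; omega
  | succ n ih =>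
    intro G hle hpos hdisc
    obtain ⟨α, β, γ⟩ := G
    simp only at hpos hle
    set m : ℤ := -((β + α) / (2 * α)) with hm
    have h2α : 0 < 2 * α := by linarith
    have hem := Int.emod_nonneg (β + α) (by omega : (2*α) ≠ 0)
    have hem2 := Int.emod_lt_of_pos (β + α) h2α
    have hemd : (β + α) % (2*α) = β + α - 2*α * ((β + α) / (2*α)) := Int.emod_def _ _
    set β' : ℤ := β + 2 * α * m with hβ'
    have he : 2 * α * m + 2 * α * ((β + α) / (2 * α)) = 0 := by rw [hm]; ring
    have hb1 : -α ≤ β' := by omega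
    have hb2 : β' < α := by omega
    have hT := act_mk (α, β, γ) 1 m 0 1
    set γ' : ℤ := α * m ^ 2 + β * m + γ with hγ'
    have hTeq : act (α, β, γ) !![1, m; 0, 1] = (α, β', γ') := by
      rw [hT]; simp only [Prod.mk.injEq]; refine ⟨by ring, by ring, by ring⟩
    have hdetT : (!![1, m; 0, 1] : Matrix (Fin 2) (Fin 2) ℤ).det = 1 := by
      simp [Matrix.det_fin_two_of]
    have hdisc' : β' ^ 2 - 4 * α * γ' = -40500 := by
      have h0 := disc_act (α, β, γ) !![1, m; 0, 1] hdetT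
      rw [hTeq] at h0
      have := h0.trans hdisc
      simpa [disc] using this
    have hγpos : 0 < γ' := by nlinarith
    by_cases hle2 : α ≤ γ'
    · refine ⟨!![1, m; 0, 1], hdetT, ?_, ?_⟩ <;> rw [hTeq]
      · simp only; rw [abs_le]; constructor <;> omega
      · simpa using hle2
    · push_neg at hle2
      have hS := act_mk (α, β', γ') 0 (-1) 1 0
      have hSeq : act (α, β', γ') !![0, -1; 1, 0] = (γ', -β', α) := by
        rw [hS]; simp only [Prod.mk.injEq]; refine ⟨by ring, by ring, by ring⟩
      have hrec := ih (γ', -β', α) (by omega) hγpos (by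
        show (-β') ^ 2 - 4 * γ' * α = -40500
        linear_combination hdisc')
      obtain ⟨h, hdet, hred⟩ := hrec
      refine ⟨!![1, m; 0, 1] * (!![0, -1; 1, 0] * h), ?_, ?_⟩
      · rw [Matrix.det_mul, Matrix.det_mul, hdetT, hdet]
        simp [Matrix.det_fin_two_of]
      · rw [← act_mul, ← act_mul, hTeq, hSeq]
        exact hred

lemma classify (m n l : ℤ) (hm : (45:ℤ) ∣ m) (hn : (45:ℤ) ∣ n) (hl : (45:ℤ) ∣ l)
    (hpos : 0 < m) (h1 : |n| ≤ m) (h2 : m ≤ l) (hd : n ^ 2 - 4 * m * l = -40500) :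
    (m = 45 ∧ n = 0 ∧ l = 225) ∨ (m = 90 ∧ n = 90 ∧ l = 135) ∨
    (m = 90 ∧ n = -90 ∧ l = 135) := by
  have habs := abs_le.mp h1
  have hml : 3 * (m * l) ≤ 40500 := by nlinarith [habs.1, habs.2]
  have hm2 : m ^ 2 ≤ 13500 := by nlinarith
  have hm' : m = 45 ∨ m = 90 := by
    rcases hm with ⟨a, rfl⟩
    have ha0 : 0 < a := by omega
    have ha2 : a ≤ 2 := by nlinarith
    interval_cases a <;> simp
  rcases hm' with rfl | rfl
  · have : n = -45 ∨ n = 0 ∨ n = 45 := by omega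
    rcases this with rfl | rfl | rfl <;> omega
  · have : n = -90 ∨ n = -45 ∨ n = 0 ∨ n = 45 ∨ n = 90 := by omega
    rcases this with rfl | rfl | rfl | rfl | rfl <;> omega

lemma selection (a b c d : ℤ) (hdet : a * d - b * c = 1) :
    ∃ x y : ℤ, ((x = a ∧ y = c) ∨ (x = b ∧ y = d) ∨ (x = a + b ∧ y = c + d) ∨
      (x = a - b ∧ y = c - d)) ∧ ¬(3:ℤ) ∣ x ∧ ¬(5:ℤ) ∣ x := by
  have h3 : ¬((3:ℤ) ∣ a ∧ (3:ℤ) ∣ b) := by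
    rintro ⟨⟨u, rfl⟩, ⟨v, rfl⟩⟩
    have : (1:ℤ) = 3 * (u * d - v * c) := by linear_combination -hdet
    omega
  have h5 : ¬((5:ℤ) ∣ a ∧ (5:ℤ) ∣ b) := by
    rintro ⟨⟨u, rfl⟩, ⟨v, rfl⟩⟩
    have : (1:ℤ) = 5 * (u * d - v * c) := by linear_combination -hdet
    omega
  by_cases ha : ¬(3:ℤ) ∣ a ∧ ¬(5:ℤ) ∣ a
  · exact ⟨a, c, Or.inl ⟨rfl, rfl⟩, ha.1, ha.2⟩
  by_cases hb : ¬(3:ℤ) ∣ b ∧ ¬(5:ℤ) ∣ b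
  · exact ⟨b, d, Or.inr (Or.inl ⟨rfl, rfl⟩), hb.1, hb.2⟩
  by_cases hab : ¬(3:ℤ) ∣ (a + b) ∧ ¬(5:ℤ) ∣ (a + b)
  · exact ⟨a + b, c + d, Or.inr (Or.inr (Or.inl ⟨rfl, rfl⟩)), hab.1, hab.2⟩
  · refine ⟨a - b, c - d, Or.inr (Or.inr (Or.inr ⟨rfl, rfl⟩)), ?_, ?_⟩ <;>
    · push_neg at ha hb hab
      omega

lemma coprime45 {x : ℤ} (h3 : ¬(3:ℤ) ∣ x) (h5 : ¬(5:ℤ) ∣ x) : IsCoprime x 45 := by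
  have c3 : IsCoprime x 3 := (Int.prime_three.coprime_iff_not_dvd.mpr h3).symm
  have c5 : IsCoprime x 5 := (((by norm_num : Prime (5:ℤ)).coprime_iff_not_dvd).mpr h5).symm
  have h : IsCoprime x (3 * (3 * 5)) := c3.mul_right (c3.mul_right c5)
  norm_num at h
  exact h

-- ===== descent step =====
lemma descent {Q : QF} (hQ : Q ∈ QDNbeta 45 20 40) (hbig : 360 ≤ Q.1) :
    ∃ Q', Q' ∈ QDNbeta 45 20 40 ∧ req 45 Q Q' ∧ Q'.1 < Q.1 := by
  obtain ⟨hA, hdvd, hdisc, hcong⟩ := hQ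
  set G : QF := (Q.1, 45 * Q.2.1, 2025 * Q.2.2) with hG
  have hGpos : 0 < G.1 := hA
  have hGdisc : disc G = -40500 := by
    show (45 * Q.2.1) ^ 2 - 4 * Q.1 * (2025 * Q.2.2) = -40500
    have : Q.2.1 ^ 2 - 4 * Q.1 * Q.2.2 = -20 := hdisc
    linear_combination 2025 * this
  obtain ⟨h, hdet, hred1, hred2⟩ := lagrange G.1.toNat G le_rfl hGpos hGdisc
  have hdet2 : h 0 0 * h 1 1 - h 0 1 * h 1 0 = 1 := by
    rw [Matrix.det_fin_two] at hdet; exact hdet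
  -- R = act G h and its coefficients
  set R : QF := act G h with hR
  have hR1 : R.1 = evalQ G (h 0 0) (h 1 0) := by simp only [hR, act, evalQ]
  have hR3 : R.2.2 = evalQ G (h 0 1) (h 1 1) := by simp only [hR, act, evalQ]
  have hRdisc : disc R = -40500 := by rw [hR, disc_act G h hdet, hGdisc]
  -- divisibility by 45 of R's coefficients
  obtain ⟨a, ha⟩ := hdvd
  have hd1 : (45:ℤ) ∣ R.1 := ⟨a * h 0 0 ^ 2 + Q.2.1 * h 0 0 * h 1 0 + 45 * Q.2.2 * h 1 0 ^ 2, by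
    show G.1 * h 0 0 ^ 2 + G.2.1 * h 0 0 * h 1 0 + G.2.2 * h 1 0 ^ 2 = _
    simp only [hG]; rw [ha]; push_cast; ring⟩
  have hd2 : (45:ℤ) ∣ R.2.1 := ⟨2 * a * h 0 0 * h 0 1 + Q.2.1 * (h 0 0 * h 1 1 + h 0 1 * h 1 0)
      + 2 * 45 * Q.2.2 * h 1 0 * h 1 1, by
    show 2 * G.1 * h 0 0 * h 0 1 + G.2.1 * (h 0 0 * h 1 1 + h 0 1 * h 1 0)
      + 2 * G.2.2 * h 1 0 * h 1 1 = _
    simp only [hG]; rw [ha]; push_cast; ring⟩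
  have hd3 : (45:ℤ) ∣ R.2.2 := ⟨a * h 0 1 ^ 2 + Q.2.1 * h 0 1 * h 1 1 + 45 * Q.2.2 * h 1 1 ^ 2, by
    show G.1 * h 0 1 ^ 2 + G.2.1 * h 0 1 * h 1 1 + G.2.2 * h 1 1 ^ 2 = _
    simp only [hG]; rw [ha]; push_cast; ring⟩
  have hRpos : 0 < R.1 := by
    rw [hR1]
    refine evalQ_pos hGpos (by rw [hGdisc]; norm_num) ?_
    rintro ⟨h1, h2⟩; rw [h1, h2] at hdet2; simp at hdet2
  -- the four small values
  have hv1 : evalQ G (h 0 0) (h 1 0) = R.1 := hR1.symm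
  have hv2 : evalQ G (h 0 1) (h 1 1) = R.2.2 := hR3.symm
  have hv3 : evalQ G (h 0 0 + h 0 1) (h 1 0 + h 1 1) = R.1 + R.2.1 + R.2.2 := by
    have := act_eval G h 1 1
    rw [← hR] at this
    simp only [evalQ] at this ⊢
    rw [mul_one] at this
    calc G.1 * (h 0 0 + h 0 1) ^ 2 + G.2.1 * (h 0 0 + h 0 1) * (h 1 0 + h 1 1)
        + G.2.2 * (h 1 0 + h 1 1) ^ 2
        = G.1 * (h 0 0 * 1 + h 0 1 * 1) ^ 2 + G.2.1 * (h 0 0 * 1 + h 0 1 * 1) *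
          (h 1 0 * 1 + h 1 1 * 1) + G.2.2 * (h 1 0 * 1 + h 1 1 * 1) ^ 2 := by ring
      _ = R.1 * 1 ^ 2 + R.2.1 * 1 * 1 + R.2.2 * 1 ^ 2 := by rw [← this]; ring
      _ = R.1 + R.2.1 + R.2.2 := by ring
  have hv4 : evalQ G (h 0 0 - h 0 1) (h 1 0 - h 1 1) = R.1 - R.2.1 + R.2.2 := by
    have := act_eval G h 1 (-1)
    rw [← hR] at this
    simp only [evalQ] at this ⊢
    calc G.1 * (h 0 0 - h 0 1) ^ 2 + G.2.1 * (h 0 0 - h 0 1) * (h 1 0 - h 1 1)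
        + G.2.2 * (h 1 0 - h 1 1) ^ 2
        = G.1 * (h 0 0 * 1 + h 0 1 * (-1)) ^ 2 + G.2.1 * (h 0 0 * 1 + h 0 1 * (-1)) *
          (h 1 0 * 1 + h 1 1 * (-1)) + G.2.2 * (h 1 0 * 1 + h 1 1 * (-1)) ^ 2 := by ring
      _ = R.1 * 1 ^ 2 + R.2.1 * 1 * (-1) + R.2.2 * (-1) ^ 2 := by rw [← this]
      _ = R.1 - R.2.1 + R.2.2 := by ring
  have hclass := classify R.1 R.2.1 R.2.2 hd1 hd2 hd3 hRpos hred1 hred2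
    (by have := hRdisc; simpa [disc] using this)
  -- all four candidate values are ≤ 315
  have hbound : evalQ G (h 0 0) (h 1 0) ≤ 315 ∧ evalQ G (h 0 1) (h 1 1) ≤ 315 ∧
      evalQ G (h 0 0 + h 0 1) (h 1 0 + h 1 1) ≤ 315 ∧
      evalQ G (h 0 0 - h 0 1) (h 1 0 - h 1 1) ≤ 315 := by
    rw [hv1, hv2, hv3, hv4]
    rcases hclass with ⟨e1, e2, e3⟩ | ⟨e1, e2, e3⟩ | ⟨e1, e2, e3⟩ <;> rw [e1, e2, e3] <;>
      norm_num
  -- select a vector with first coordinate coprime to 45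
  obtain ⟨x, y, hcase, h3, h5⟩ := selection (h 0 0) (h 0 1) (h 1 0) (h 1 1) hdet2
  have hval : evalQ G x y ≤ 315 := by
    rcases hcase with ⟨rfl, rfl⟩ | ⟨rfl, rfl⟩ | ⟨rfl, rfl⟩ | ⟨rfl, rfl⟩
    exacts [hbound.1, hbound.2.1, hbound.2.2.1, hbound.2.2.2]
  have hxy : IsCoprime x y := by
    rcases hcase with ⟨rfl, rfl⟩ | ⟨rfl, rfl⟩ | ⟨rfl, rfl⟩ | ⟨rfl, rfl⟩
    · exact ⟨h 1 1, -(h 0 1), by linear_combination hdet2⟩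
    · exact ⟨-(h 1 0), h 0 0, by linear_combination hdet2⟩
    · exact ⟨h 1 1, -(h 0 1), by linear_combination hdet2⟩
    · exact ⟨h 1 1, -(h 0 1), by linear_combination hdet2⟩
  have hco : IsCoprime x (45 * y) := (coprime45 h3 h5).mul_right hxy
  obtain ⟨u, v, huv⟩ := hco
  -- the Γ₀(45) matrix
  set g : Matrix (Fin 2) (Fin 2) ℤ := !![x, -v; 45 * y, u] with hg
  have hgmem : g ∈ Gamma0 45 := by
    constructor
    · rw [hg, Matrix.det_fin_two_of]; linear_combination huv
    · rw [hg, entry10]; exact ⟨y, rfl⟩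
  have hQ' : act Q g ∈ QDNbeta 45 20 40 :=
    mem_act ⟨hA, ⟨a, ha⟩, hdisc, hcong⟩ hgmem
  refine ⟨act Q g, hQ', ⟨g, hgmem, rfl⟩, ?_⟩
  have : (act Q g).1 = evalQ G x y := by
    rw [hg, act_mk]
    show Q.1 * x ^ 2 + Q.2.1 * x * (45 * y) + Q.2.2 * (45 * y) ^ 2 = _
    simp only [evalQ, hG]
    ring
  rw [this]
  omega

-- ===== T-normalization =====
lemma Tnorm (Q : QF) (hA : 0 < Q.1) :
    ∃ b' c', ∃ g ∈ Gamma0 45, act Q g = (Q.1, b', c') ∧ -Q.1 ≤ b' ∧ b' < Q.1 := by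
  set n : ℤ := -((Q.2.1 + Q.1) / (2 * Q.1)) with hn
  have hem := Int.emod_nonneg (Q.2.1 + Q.1) (by omega : (2 * Q.1) ≠ 0)
  have hem2 := Int.emod_lt_of_pos (Q.2.1 + Q.1) (by linarith : 0 < 2 * Q.1)
  have hemd : (Q.2.1 + Q.1) % (2 * Q.1)
      = Q.2.1 + Q.1 - 2 * Q.1 * ((Q.2.1 + Q.1) / (2 * Q.1)) := Int.emod_def _ _
  have he : 2 * Q.1 * n + 2 * Q.1 * ((Q.2.1 + Q.1) / (2 * Q.1)) = 0 := by rw [hn]; ring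
  refine ⟨Q.2.1 + 2 * Q.1 * n, Q.1 * n ^ 2 + Q.2.1 * n + Q.2.2, !![1, n; 0, 1],
    ⟨by rw [Matrix.det_fin_two_of]; norm_num, by rw [entry10]; norm_num⟩, ?_, by omega, by omega⟩
  rw [act_mk]
  simp only [Prod.mk.injEq]
  refine ⟨by ring, by ring, by ring⟩

-- ===== the main induction =====
lemma complete : ∀ (N : ℕ) (Q : QF), Q ∈ QDNbeta 45 20 40 → Q.1.toNat ≤ N →
    req 45 Q (405, 40, 1) ∨ req 45 Q (90, -50, 7) := by
  intro N
  induction N with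
  | zero => intro Q hQ hle; have := hQ.1; omega
  | succ N ih =>
    intro Q hQ hle
    by_cases hbig : 360 ≤ Q.1
    · obtain ⟨Q', hQ', hreq, hlt⟩ := descent hQ hbig
      have h1 : 0 < Q'.1 := hQ'.1
      rcases ih Q' hQ' (by omega) with h | h
      · exact Or.inl (req_trans hreq h)
      · exact Or.inr (req_trans hreq h)
    · push_neg at hbig
      have hA := hQ.1
      obtain ⟨b', c', g, hgmem, hact, hb1, hb2⟩ := Tnorm Q hA
      have hreq : req 45 Q (Q.1, b', c') := ⟨g, hgmem, hact⟩
      have hmem : (Q.1, b', c') ∈ QDNbeta 45 20 40 := hact ▸ mem_act hQ hgmem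
      obtain ⟨-, -, hdisc', hcong'⟩ := hmem
      have hd : b' ^ 2 - 4 * Q.1 * c' = -20 := hdisc'
      obtain ⟨k, hk⟩ := hcong'
      push_cast at hk
      obtain ⟨a, ha⟩ := hQ.2.1
      push_cast at ha
      have hAcases : Q.1 = 45 ∨ Q.1 = 90 ∨ Q.1 = 135 ∨ Q.1 = 180 ∨ Q.1 = 225 ∨
          Q.1 = 270 ∨ Q.1 = 315 := by omega
      rcases hAcases with hA1 | hA1 | hA1 | hA1 | hA1 | hA1 | hA1 <;>
        rw [hA1] at hreq hd hb1 hb2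
      · -- A = 45 : b' = 40, c' = 9, (45,40,9) → (405,40,1)
        have hb : b' = 40 := by omega
        rw [hb] at hd hreq
        have hc : c' = 9 := by norm_num at hd; omega
        rw [hc] at hreq
        refine Or.inl (req_trans hreq ⟨!![-22, -1; 45, 2],
          ⟨by rw [Matrix.det_fin_two_of]; norm_num, by rw [entry10]; norm_num⟩, ?_⟩)
        rw [act_mk]; norm_num
      · -- A = 90 : b' = -50, c' = 7, identity
        have hb : b' = -50 ∨ b' = 40 := by omega
        rcases hb with hb | hb <;> rw [hb] at hd hreq
        · have hc : c' = 7 := by norm_num at hd; omega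
          rw [hc] at hreq
          refine Or.inr (req_trans hreq ⟨!![1, 0; 0, 1],
            ⟨by rw [Matrix.det_fin_two_of]; norm_num, by rw [entry10]; norm_num⟩, ?_⟩)
          rw [act_mk]; norm_num
        · exfalso; norm_num at hd; omega
      · -- A = 135 : b' = 40, c' = 3 → (90,-50,7)
        have hb : b' = -50 ∨ b' = 40 ∨ b' = 130 := by omega
        rcases hb with hb | hb | hb <;> rw [hb] at hd hreq
        · exfalso; norm_num at hd; omega
        · have hc : c' = 3 := by norm_num at hd; omega
          rw [hc] at hreq
          refine Or.inr (req_trans hreq ⟨!![-7, 2; 45, -13],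
            ⟨by rw [Matrix.det_fin_two_of]; norm_num, by rw [entry10]; norm_num⟩, ?_⟩)
          rw [act_mk]; norm_num
        · exfalso; norm_num at hd; omega
      · -- A = 180 : no forms
        exfalso
        have hb : b' = -140 ∨ b' = -50 ∨ b' = 40 ∨ b' = 130 := by omega
        rcases hb with hb | hb | hb | hb <;> rw [hb] at hd <;> norm_num at hd <;> omega
      · -- A = 225 : no forms
        exfalso
        have hb : b' = -230 ∨ b' = -140 ∨ b' = -50 ∨ b' = 40 ∨ b' = 130 ∨ b' = 220 := by omega
        rcases hb with hb | hb | hb | hb | hb | hb <;> rw [hb] at hd <;> norm_num at hd <;> omega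
      · -- A = 270 : b' = -230, c' = 49 → (405,40,1)
        have hb : b' = -230 ∨ b' = -140 ∨ b' = -50 ∨ b' = 40 ∨ b' = 130 ∨ b' = 220 := by omega
        rcases hb with hb | hb | hb | hb | hb | hb <;> rw [hb] at hd <;>
          [skip; (exfalso; norm_num at hd; omega); (exfalso; norm_num at hd; omega);
           (exfalso; norm_num at hd; omega); (exfalso; norm_num at hd; omega);
           (exfalso; norm_num at hd; omega)]
        rw [hb] at hreq
        have hc : c' = 49 := by norm_num at hd; omega
        rw [hc] at hreq
        refine Or.inl (req_trans hreq ⟨!![-58, -3; -135, -7],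
          ⟨by rw [Matrix.det_fin_two_of]; norm_num, by rw [entry10]; norm_num⟩, ?_⟩)
        rw [act_mk]; norm_num
      · -- A = 315 : b' ∈ {-230, -50}
        have hb : b' = -230 ∨ b' = -140 ∨ b' = -50 ∨ b' = 40 ∨ b' = 130 ∨ b' = 220 ∨
            b' = 310 := by omega
        rcases hb with hb | hb | hb | hb | hb | hb | hb <;> rw [hb] at hd hreq
        · have hc : c' = 42 := by norm_num at hd; omega
          rw [hc] at hreq
          refine Or.inr (req_trans hreq ⟨!![-16, 5; -45, 14],
            ⟨by rw [Matrix.det_fin_two_of]; norm_num, by rw [entry10]; norm_num⟩, ?_⟩)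
          rw [act_mk]; norm_num
        · exfalso; norm_num at hd; omega
        · have hc : c' = 2 := by norm_num at hd; omega
          rw [hc] at hreq
          refine Or.inr (req_trans hreq ⟨!![-4, 1; -45, 11],
            ⟨by rw [Matrix.det_fin_two_of]; norm_num, by rw [entry10]; norm_num⟩, ?_⟩)
          rw [act_mk]; norm_num
        · exfalso; norm_num at hd; omega
        · exfalso; norm_num at hd; omega
        · exfalso; norm_num at hd; omega
        · exfalso; norm_num at hd; omega

/-- `Q_{20,45,40}` has exactly the two `Γ₀(45)`-orbits of `[405, 40, 1]` and
`[90, −50, 7]`: both forms lie in the set, they are inequivalent, and every form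
in the set is equivalent to one of them. -/
theorem Q_20_45_40_two_orbits :
    ((405, 40, 1) : QF) ∈ QDNbeta 45 20 40
    ∧ ((90, -50, 7) : QF) ∈ QDNbeta 45 20 40
    ∧ ¬ req 45 (405, 40, 1) (90, -50, 7)
    ∧ ∀ Q ∈ QDNbeta 45 20 40, req 45 Q (405, 40, 1) ∨ req 45 Q (90, -50, 7) := by
  refine ⟨?_, ?_, ?_, ?_⟩
  · refine ⟨by norm_num, ⟨9, by norm_num⟩, by norm_num [disc], ⟨0, by norm_num⟩⟩
  · refine ⟨by norm_num, ⟨2, by norm_num⟩, by norm_num [disc], ⟨-1, by norm_num⟩⟩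
  · rintro ⟨g, hg, hact⟩
    -- then (90,-50,7) represents 7, so (405,40,1) represents 7 at (g 0 1, g 1 1)
    have h7 : evalQ (act ((405:ℤ), (40:ℤ), (1:ℤ)) g) 0 1 = 7 := by rw [hact]; simp [evalQ]
    rw [act_eval] at h7
    simp only [evalQ, mul_zero, zero_add, mul_one] at h7
    obtain ⟨q, s, key⟩ : ∃ q s : ℤ, (s + 20 * q) ^ 2 + 5 * q ^ 2 = 7 :=
      ⟨g 0 1, g 1 1, by linear_combination h7⟩
    have hdec : ∀ a b : ZMod 5, (b + 20 * a) ^ 2 + 5 * a ^ 2 ≠ 7 := by decide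
    have hc : (((s + 20 * q) ^ 2 + 5 * q ^ 2 : ℤ) : ZMod 5) = ((7 : ℤ) : ZMod 5) := by rw [key]
    push_cast at hc
    exact hdec _ _ hc
  · intro Q hQ
    exact complete Q.1.toNat Q hQ le_rfl
end
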